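/- arXiv:1809.01282 — 8 statements merged into one kernel-verified Lean document; each statement's English description precedes it below -/
import Mathlib

section
/- For any family (ℰ_ω)_{ω∈Ω} of exact structures on an additive category 𝒜, the intersection ⋂_{ω∈Ω} ℰ_ω is again an exact structure on 𝒜. -/
open CategoryTheory CategoryTheory.Limits

universe v u

variable {C : Type u} [Category.{v} C] [Preadditive C]

/-- A kernel-cokernel pair: `S.f` is a kernel of `S.g` and `S.g` is a cokernel of `S.f`. -/
structure IsKernelCokernelPair (S : ShortComplex C) : Prop where
  isKernel : Nonempty (IsLimit (KernelFork.ofι S.f S.zero))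
  isCokernel : Nonempty (IsColimit (CokernelCofork.ofπ S.g S.zero))

/-- `i` is an admissible monic for the class `E`. -/
def AdmissibleMono (E : Set (ShortComplex C)) {A B : C} (i : A ⟶ B) : Prop :=
  ∃ (Z : C) (d : B ⟶ Z) (w : i ≫ d = 0), ShortComplex.mk i d w ∈ E

/-- `d` is an admissible epic for the class `E`. -/
def AdmissibleEpi (E : Set (ShortComplex C)) {B Z : C} (d : B ⟶ Z) : Prop :=
  ∃ (A : C) (i : A ⟶ B) (w : i ≫ d = 0), ShortComplex.mk i d w ∈ E

/-- Quillen's axioms for an exact structure on an additive category. -/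
structure IsExactStructure (E : Set (ShortComplex C)) : Prop where
  kcp : ∀ S ∈ E, IsKernelCokernelPair S
  iso_closed : ∀ S T : ShortComplex C, S ∈ E → Nonempty (S ≅ T) → T ∈ E
  id_mono : ∀ A : C, AdmissibleMono E (𝟙 A)
  id_epi : ∀ A : C, AdmissibleEpi E (𝟙 A)
  mono_comp : ∀ {A B D : C} (i : A ⟶ B) (j : B ⟶ D),
    AdmissibleMono E i → AdmissibleMono E j → AdmissibleMono E (i ≫ j)
  epi_comp : ∀ {A B D : C} (p : A ⟶ B) (q : B ⟶ D),
    AdmissibleEpi E p → AdmissibleEpi E q → AdmissibleEpi E (p ≫ q)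
  pushout : ∀ {A B X : C} (i : A ⟶ B) (t : A ⟶ X), AdmissibleMono E i →
    ∃ (P : C) (sB : B ⟶ P) (sX : X ⟶ P), IsPushout i t sB sX ∧ AdmissibleMono E sX
  pullback : ∀ {B X Y : C} (d : B ⟶ X) (t : Y ⟶ X), AdmissibleEpi E d →
    ∃ (P : C) (pB : P ⟶ B) (pY : P ⟶ Y), IsPullback pB pY d t ∧ AdmissibleEpi E pY

/-- The class of split short exact sequences: those isomorphic to
`A → A ⊞ B → B` with the canonical inclusion and projection. -/
def splitClass (C : Type u) [Category.{v} C] [Preadditive C] [HasBinaryBiproducts C] :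
    Set (ShortComplex C) :=
  { S | ∃ (A B : C), Nonempty (S ≅ ShortComplex.mk (biprod.inl : A ⟶ A ⊞ B)
      (biprod.snd : A ⊞ B ⟶ B) (by simp)) }


section Aux

variable {E : Set (ShortComplex C)}

/-- If a complex with first map `f` belongs to `E`, then so does any complex with the
same first map whose second map is also a cokernel of `f`. -/
lemma mem_of_isColimit (hE : IsExactStructure E)
    {A B Z Z' : C} {f : A ⟶ B} {d : B ⟶ Z} {d' : B ⟶ Z'} {w : f ≫ d = 0} {w' : f ≫ d' = 0}
    (hS : ShortComplex.mk f d w ∈ E)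
    (hc' : IsColimit (CokernelCofork.ofπ d' w')) :
    ShortComplex.mk f d' w' ∈ E := by
  obtain ⟨hc⟩ := (hE.kcp _ hS).isCokernel
  refine hE.iso_closed _ _ hS ⟨ShortComplex.isoMk (Iso.refl _) (Iso.refl _)
    (hc.coconePointUniqueUpToIso hc') (by simp) ?_⟩
  simpa using (hc.comp_coconePointUniqueUpToIso_hom hc' WalkingParallelPair.one).symm

/-- Dual of `mem_of_isColimit`. -/
lemma mem_of_isLimit (hE : IsExactStructure E)
    {A A' B Z : C} {g : B ⟶ Z} {i : A ⟶ B} {i' : A' ⟶ B} {w : i ≫ g = 0} {w' : i' ≫ g = 0}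
    (hS : ShortComplex.mk i g w ∈ E)
    (hc' : IsLimit (KernelFork.ofι i' w')) :
    ShortComplex.mk i' g w' ∈ E := by
  obtain ⟨hc⟩ := (hE.kcp _ hS).isKernel
  refine hE.iso_closed _ _ hS ⟨ShortComplex.isoMk
    (hc.conePointUniqueUpToIso hc') (Iso.refl _) (Iso.refl _) ?_ (by simp)⟩
  simpa using hc.conePointUniqueUpToIso_hom_comp hc' WalkingParallelPair.zero

/-- Admissible monics are stable under postcomposition with isomorphisms. -/
lemma AdmissibleMono.comp_iso (hE : IsExactStructure E) {A B B' : C} {m : A ⟶ B}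
    (hm : AdmissibleMono E m) (e : B ≅ B') : AdmissibleMono E (m ≫ e.hom) := by
  obtain ⟨Z, d, w, hS⟩ := hm
  refine ⟨Z, e.inv ≫ d, by rw [Category.assoc, e.hom_inv_id_assoc, w],
    hE.iso_closed _ _ hS ⟨ShortComplex.isoMk (Iso.refl _) e (Iso.refl _) (by simp) (by simp)⟩⟩

/-- Admissible epics are stable under precomposition with isomorphisms. -/
lemma AdmissibleEpi.iso_comp (hE : IsExactStructure E) {B B' Z : C} {p : B ⟶ Z}
    (hp : AdmissibleEpi E p) (e : B' ≅ B) : AdmissibleEpi E (e.hom ≫ p) := by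
  obtain ⟨A, i, w, hS⟩ := hp
  refine ⟨A, i ≫ e.inv, by rw [Category.assoc, e.inv_hom_id_assoc, w],
    hE.iso_closed _ _ hS ⟨ShortComplex.isoMk (Iso.refl _) e.symm (Iso.refl _) (by simp) (by simp)⟩⟩

/-- A morphism admissible monic for every member of a family is admissible monic for the
intersection. -/
lemma admissibleMono_iInter {Ω : Type*} [Nonempty Ω]
    (𝓔 : Ω → Set (ShortComplex C)) (h : ∀ ω, IsExactStructure (𝓔 ω))
    {A B : C} {m : A ⟶ B} (hm : ∀ ω, AdmissibleMono (𝓔 ω) m) :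
    AdmissibleMono (⋂ ω, 𝓔 ω) m := by
  obtain ⟨ω₀⟩ := (inferInstance : Nonempty Ω)
  obtain ⟨Z, d, w, hS⟩ := hm ω₀
  obtain ⟨hc⟩ := ((h ω₀).kcp _ hS).isCokernel
  refine ⟨Z, d, w, Set.mem_iInter.2 fun ω => ?_⟩
  obtain ⟨Z', d', w', hS'⟩ := hm ω
  exact mem_of_isColimit (h ω) hS' hc

/-- Dual of `admissibleMono_iInter`. -/
lemma admissibleEpi_iInter {Ω : Type*} [Nonempty Ω]
    (𝓔 : Ω → Set (ShortComplex C)) (h : ∀ ω, IsExactStructure (𝓔 ω))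
    {B Z : C} {p : B ⟶ Z} (hp : ∀ ω, AdmissibleEpi (𝓔 ω) p) :
    AdmissibleEpi (⋂ ω, 𝓔 ω) p := by
  obtain ⟨ω₀⟩ := (inferInstance : Nonempty Ω)
  obtain ⟨A, i, w, hS⟩ := hp ω₀
  obtain ⟨hc⟩ := ((h ω₀).kcp _ hS).isKernel
  refine ⟨A, i, w, Set.mem_iInter.2 fun ω => ?_⟩
  obtain ⟨A', i', w', hS'⟩ := hp ω
  exact mem_of_isLimit (h ω) hS' hc

lemma admissibleMono_of_iInter {Ω : Type*}
    {𝓔 : Ω → Set (ShortComplex C)} {A B : C} {m : A ⟶ B}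
    (hm : AdmissibleMono (⋂ ω, 𝓔 ω) m) (ω : Ω) : AdmissibleMono (𝓔 ω) m := by
  obtain ⟨Z, d, w, hS⟩ := hm
  exact ⟨Z, d, w, Set.mem_iInter.1 hS ω⟩

lemma admissibleEpi_of_iInter {Ω : Type*}
    {𝓔 : Ω → Set (ShortComplex C)} {B Z : C} {p : B ⟶ Z}
    (hp : AdmissibleEpi (⋂ ω, 𝓔 ω) p) (ω : Ω) : AdmissibleEpi (𝓔 ω) p := by
  obtain ⟨A, i, w, hS⟩ := hp
  exact ⟨A, i, w, Set.mem_iInter.1 hS ω⟩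

end Aux

/-- The intersection of a (nonempty) family of exact structures on an additive
category is again an exact structure. -/
theorem iInter_isExactStructure {Ω : Type*} [Nonempty Ω]
    (𝓔 : Ω → Set (ShortComplex C)) (h : ∀ ω, IsExactStructure (𝓔 ω)) :
    IsExactStructure (⋂ ω, 𝓔 ω) := by
  constructor
  · intro S hS
    exact (h (Classical.arbitrary Ω)).kcp S (Set.mem_iInter.1 hS _)
  · intro S T hS hST
    exact Set.mem_iInter.2 fun ω => (h ω).iso_closed S T (Set.mem_iInter.1 hS ω) hST
  · intro A
    exact admissibleMono_iInter 𝓔 h fun ω => (h ω).id_mono A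
  · intro A
    exact admissibleEpi_iInter 𝓔 h fun ω => (h ω).id_epi A
  · intro A B D i j hi hj
    exact admissibleMono_iInter 𝓔 h fun ω =>
      (h ω).mono_comp i j (admissibleMono_of_iInter hi ω) (admissibleMono_of_iInter hj ω)
  · intro A B D p q hp hq
    exact admissibleEpi_iInter 𝓔 h fun ω =>
      (h ω).epi_comp p q (admissibleEpi_of_iInter hp ω) (admissibleEpi_of_iInter hq ω)
  · intro A B X i t hi
    obtain ⟨ω₀⟩ := (inferInstance : Nonempty Ω)
    obtain ⟨P, sB, sX, hP, hsX⟩ := (h ω₀).pushout i t (admissibleMono_of_iInter hi ω₀)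
    refine ⟨P, sB, sX, hP, admissibleMono_iInter 𝓔 h fun ω => ?_⟩
    obtain ⟨P', sB', sX', hP', hsX'⟩ := (h ω).pushout i t (admissibleMono_of_iInter hi ω)
    have key : sX' ≫ (hP'.isColimit.coconePointUniqueUpToIso hP.isColimit).hom = sX :=
      hP'.isColimit.comp_coconePointUniqueUpToIso_hom hP.isColimit WalkingSpan.right
    rw [← key]
    exact hsX'.comp_iso (h ω) _
  · intro B X Y d t hd
    obtain ⟨ω₀⟩ := (inferInstance : Nonempty Ω)
    obtain ⟨P, pB, pY, hP, hpY⟩ := (h ω₀).pullback d t (admissibleEpi_of_iInter hd ω₀)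
    refine ⟨P, pB, pY, hP, admissibleEpi_iInter 𝓔 h fun ω => ?_⟩
    obtain ⟨P', pB', pY', hP', hpY'⟩ := (h ω).pullback d t (admissibleEpi_of_iInter hd ω)
    have key : (hP.isLimit.conePointUniqueUpToIso hP'.isLimit).hom ≫ pY' = pY :=
      hP.isLimit.conePointUniqueUpToIso_hom_comp hP'.isLimit WalkingCospan.right
    rw [← key]
    exact hpY'.iso_comp (h ω) _
end

section
/- The poset Ex(𝒜) of exact structures on an additive category 𝒜, ordered by containment, is a complete bounded lattice, with meet given by intersection, bottom element the split exact structure ℰ_min, and top element the maximal exact structure ℰ_max. -/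
open CategoryTheory CategoryTheory.Limits

universe v u

variable {C : Type u} [Category.{v} C] [Preadditive C]

/-! ### Auxiliary material -/

namespace ExAux

open ZeroObject

/-- Split data for a kernel-cokernel pair `(i, d)`. -/
def IsSplit {A B Z : C} (i : A ⟶ B) (d : B ⟶ Z) : Prop :=
  ∃ (r : B ⟶ A) (s : Z ⟶ B),
    i ≫ r = 𝟙 A ∧ s ≫ d = 𝟙 Z ∧ i ≫ d = 0 ∧ s ≫ r = 0 ∧ r ≫ i + d ≫ s = 𝟙 B

lemma IsSplit.isKernel {A B Z : C} {i : A ⟶ B} {d : B ⟶ Z} (h : IsSplit i d)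
    (w : i ≫ d = 0) : Nonempty (IsLimit (KernelFork.ofι i w)) := by
  obtain ⟨r, s, e1, e2, e3, e4, e5⟩ := h
  refine ⟨KernelFork.IsLimit.ofι i w (fun g' _ => g' ≫ r) (fun g' hg' => ?_)
    (fun g' hg' m hm => ?_)⟩
  · have h0 : g' ≫ (r ≫ i + d ≫ s) = g' := by rw [e5, Category.comp_id]
    rw [Preadditive.comp_add, ← Category.assoc, ← Category.assoc, hg', zero_comp,
      add_zero] at h0
    simpa using h0
  · show m = g' ≫ r
    rw [← hm, Category.assoc, e1, Category.comp_id]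

lemma IsSplit.isCokernel {A B Z : C} {i : A ⟶ B} {d : B ⟶ Z} (h : IsSplit i d)
    (w : i ≫ d = 0) : Nonempty (IsColimit (CokernelCofork.ofπ d w)) := by
  obtain ⟨r, s, e1, e2, e3, e4, e5⟩ := h
  refine ⟨CokernelCofork.IsColimit.ofπ d w (fun g' _ => s ≫ g') (fun g' hg' => ?_)
    (fun g' hg' m hm => ?_)⟩
  · have h0 : (r ≫ i + d ≫ s) ≫ g' = g' := by rw [e5, Category.id_comp]
    rw [Preadditive.add_comp, Category.assoc, Category.assoc, hg', comp_zero,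
      zero_add] at h0
    simpa using h0
  · show m = s ≫ g'
    rw [← hm, ← Category.assoc, e2, Category.id_comp]

lemma IsSplit.kcp {A B Z : C} {i : A ⟶ B} {d : B ⟶ Z} (h : IsSplit i d)
    (w : i ≫ d = 0) : IsKernelCokernelPair (ShortComplex.mk i d w) :=
  ⟨h.isKernel w, h.isCokernel w⟩

lemma isSplit_inl [HasBinaryBiproducts C] (A B : C) :
    IsSplit (biprod.inl : A ⟶ A ⊞ B) (biprod.snd : A ⊞ B ⟶ B) :=
  ⟨biprod.fst, biprod.inr, by simp, by simp, by simp, by simp, biprod.total⟩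

lemma isSplit_inr [HasBinaryBiproducts C] (A B : C) :
    IsSplit (biprod.inr : B ⟶ A ⊞ B) (biprod.fst : A ⊞ B ⟶ A) :=
  ⟨biprod.snd, biprod.inl, by simp, by simp, by simp, by simp,
    by rw [add_comm]; exact biprod.total⟩

lemma IsSplit.mem [HasBinaryBiproducts C] {A B Z : C} {i : A ⟶ B} {d : B ⟶ Z}
    (h : IsSplit i d) (w : i ≫ d = 0) : ShortComplex.mk i d w ∈ splitClass C := by
  obtain ⟨r, s, e1, e2, e3, e4, e5⟩ := h
  refine ⟨A, Z, ⟨ShortComplex.isoMk (Iso.refl A)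
    (⟨biprod.lift r d, biprod.desc i s, by rw [biprod.lift_desc]; exact e5, ?_⟩ : B ≅ A ⊞ Z)
    (Iso.refl Z) ?_ ?_⟩⟩
  · apply biprod.hom_ext' <;> apply biprod.hom_ext <;>
      simp [e1, e2, e3, e4]
  · apply biprod.hom_ext <;> simp [e1, e3]
  · simp

lemma IsSplit.of_iso {S T : ShortComplex C} (h : IsSplit T.f T.g) (φ : S ≅ T) :
    IsSplit S.f S.g := by
  obtain ⟨r, s, e1, e2, e3, e4, e5⟩ := h
  have h12 : φ.hom.τ₁ ≫ φ.inv.τ₁ = 𝟙 _ := by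
    rw [← ShortComplex.comp_τ₁, φ.hom_inv_id, ShortComplex.id_τ₁]
  have h21 : φ.inv.τ₂ ≫ φ.hom.τ₂ = 𝟙 _ := by
    rw [← ShortComplex.comp_τ₂, φ.inv_hom_id, ShortComplex.id_τ₂]
  have h22 : φ.hom.τ₂ ≫ φ.inv.τ₂ = 𝟙 _ := by
    rw [← ShortComplex.comp_τ₂, φ.hom_inv_id, ShortComplex.id_τ₂]
  have h33 : φ.hom.τ₃ ≫ φ.inv.τ₃ = 𝟙 _ := by
    rw [← ShortComplex.comp_τ₃, φ.hom_inv_id, ShortComplex.id_τ₃]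
  refine ⟨φ.hom.τ₂ ≫ r ≫ φ.inv.τ₁, φ.hom.τ₃ ≫ s ≫ φ.inv.τ₂, ?_, ?_, S.zero, ?_, ?_⟩
  · rw [← Category.assoc, ← Category.assoc, ← φ.hom.comm₁₂]
    rw [Category.assoc, Category.assoc]
    rw [← Category.assoc T.f r, e1, Category.id_comp, h12]
  · rw [Category.assoc, Category.assoc, φ.inv.comm₂₃, ← Category.assoc s, e2,
      Category.id_comp, h33]
  · rw [Category.assoc, Category.assoc]
    rw [← Category.assoc (φ.inv.τ₂), h21, Category.id_comp]
    rw [← Category.assoc s r, e4, zero_comp, comp_zero]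
  · have c1 : φ.inv.τ₁ ≫ S.f = T.f ≫ φ.inv.τ₂ := φ.inv.comm₁₂
    have c2 : S.g ≫ φ.hom.τ₃ = φ.hom.τ₂ ≫ T.g := (φ.hom.comm₂₃).symm
    calc (φ.hom.τ₂ ≫ r ≫ φ.inv.τ₁) ≫ S.f + S.g ≫ φ.hom.τ₃ ≫ s ≫ φ.inv.τ₂
        = φ.hom.τ₂ ≫ (r ≫ T.f + T.g ≫ s) ≫ φ.inv.τ₂ := by
          simp only [Preadditive.comp_add, Preadditive.add_comp, Category.assoc, c1,
            reassoc_of% c2]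
      _ = 𝟙 _ := by rw [e5, Category.id_comp, h22]

lemma mem_isSplit [HasBinaryBiproducts C] {S : ShortComplex C} (h : S ∈ splitClass C) :
    IsSplit S.f S.g := by
  obtain ⟨A, B, ⟨φ⟩⟩ := h
  exact IsSplit.of_iso (isSplit_inl A B) φ

lemma mem_isSplit' [HasBinaryBiproducts C] {A B Z : C} {i : A ⟶ B} {d : B ⟶ Z}
    {w : i ≫ d = 0} (h : ShortComplex.mk i d w ∈ splitClass C) : IsSplit i d :=
  mem_isSplit h

/-- Two kernel-cokernel pairs with the same admissible mono are isomorphic. -/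
lemma cok_iso {A B Z Z' : C} (i : A ⟶ B) (d : B ⟶ Z) (d' : B ⟶ Z')
    (w : i ≫ d = 0) (w' : i ≫ d' = 0)
    (h : Nonempty (IsColimit (CokernelCofork.ofπ d w)))
    (h' : Nonempty (IsColimit (CokernelCofork.ofπ d' w'))) :
    Nonempty (ShortComplex.mk i d w ≅ ShortComplex.mk i d' w') := by
  obtain ⟨h⟩ := h; obtain ⟨h'⟩ := h'
  refine ⟨ShortComplex.isoMk (Iso.refl _) (Iso.refl _)
    (h.coconePointUniqueUpToIso h') (by simp) ?_⟩
  have := h.comp_coconePointUniqueUpToIso_hom h' WalkingParallelPair.one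
  simpa using this.symm

/-- Two kernel-cokernel pairs with the same admissible epi are isomorphic. -/
lemma ker_iso {A A' B Z : C} (d : B ⟶ Z) (i : A ⟶ B) (i' : A' ⟶ B)
    (w : i ≫ d = 0) (w' : i' ≫ d = 0)
    (h : Nonempty (IsLimit (KernelFork.ofι i w)))
    (h' : Nonempty (IsLimit (KernelFork.ofι i' w'))) :
    Nonempty (ShortComplex.mk i d w ≅ ShortComplex.mk i' d w') := by
  obtain ⟨h⟩ := h; obtain ⟨h'⟩ := h'
  refine ⟨ShortComplex.isoMk (h.conePointUniqueUpToIso h') (Iso.refl _) (Iso.refl _) ?_ (by simp)⟩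
  have := h.conePointUniqueUpToIso_hom_comp h' WalkingParallelPair.zero
  simpa using this

lemma amono_comp_iso {E : Set (ShortComplex C)} (hE : IsExactStructure E)
    {A B B' : C} {i : A ⟶ B} (e : B ≅ B') (h : AdmissibleMono E i) :
    AdmissibleMono E (i ≫ e.hom) := by
  obtain ⟨Z, d, w, hS⟩ := h
  refine ⟨Z, e.inv ≫ d, by rw [Category.assoc, e.hom_inv_id_assoc, w], ?_⟩
  exact hE.iso_closed _ _ hS
    ⟨ShortComplex.isoMk (Iso.refl _) e (Iso.refl _) (by simp) (by simp)⟩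

lemma aepi_iso_comp {E : Set (ShortComplex C)} (hE : IsExactStructure E)
    {B B' Z : C} {d : B ⟶ Z} (e : B' ≅ B) (h : AdmissibleEpi E d) :
    AdmissibleEpi E (e.hom ≫ d) := by
  obtain ⟨A, i, w, hS⟩ := h
  refine ⟨A, i ≫ e.inv, by rw [Category.assoc, e.inv_hom_id_assoc, w], ?_⟩
  exact hE.iso_closed _ _ hS
    ⟨ShortComplex.isoMk (Iso.refl _) e.symm (Iso.refl _) (by simp) (by simp)⟩

lemma adm_mono_mem {E F : Set (ShortComplex C)} (hE : IsExactStructure E)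
    (hF : IsExactStructure F) {A B Z : C} {i : A ⟶ B} {d : B ⟶ Z} {w : i ≫ d = 0}
    (hS : ShortComplex.mk i d w ∈ E) (h : AdmissibleMono F i) :
    ShortComplex.mk i d w ∈ F := by
  obtain ⟨Z', d', w', hS'⟩ := h
  exact hF.iso_closed _ _ hS'
    (cok_iso i d' d w' w (hF.kcp _ hS').isCokernel (hE.kcp _ hS).isCokernel)

lemma adm_epi_mem {E F : Set (ShortComplex C)} (hE : IsExactStructure E)
    (hF : IsExactStructure F) {A B Z : C} {i : A ⟶ B} {d : B ⟶ Z} {w : i ≫ d = 0}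
    (hS : ShortComplex.mk i d w ∈ E) (h : AdmissibleEpi F d) :
    ShortComplex.mk i d w ∈ F := by
  obtain ⟨A', i', w', hS'⟩ := h
  exact hF.iso_closed _ _ hS'
    (ker_iso d i' i w' w (hF.kcp _ hS').isKernel (hE.kcp _ hS).isKernel)

section SplitExact

variable [HasZeroObject C] [HasBinaryBiproducts C]

theorem splitClass_isExact : IsExactStructure (splitClass C) := by
  constructor
  · -- kcp
    intro S hS
    exact (mem_isSplit hS).kcp S.zero
  · -- iso_closed
    rintro S T ⟨A, B, ⟨φ⟩⟩ ⟨e⟩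
    exact ⟨A, B, ⟨e.symm ≪≫ φ⟩⟩
  · -- id_mono
    intro A
    refine ⟨0, 0, by simp, IsSplit.mem ⟨𝟙 A, 0, by simp, ?_, by simp, by simp, by simp⟩ _⟩
    apply (isZero_zero C).eq_of_src
  · -- id_epi
    intro A
    refine ⟨0, 0, by simp, IsSplit.mem ⟨0, 𝟙 A, ?_, by simp, by simp, by simp, by simp⟩ _⟩
    apply (isZero_zero C).eq_of_src
  · -- mono_comp
    intro A B D i j hi hj
    obtain ⟨Z, d, w, hS⟩ := hi
    obtain ⟨Z', d', w', hS'⟩ := hj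
    obtain ⟨r, s, e1, e2, e3, e4, e5⟩ := mem_isSplit' hS
    obtain ⟨r', s', f1, f2, f3, f4, f5⟩ := mem_isSplit' hS'
    have g1 : (i ≫ j) ≫ r' ≫ r = 𝟙 A := by
      simp [reassoc_of% f1, e1]
    have g3 : (i ≫ j) ≫ biprod.lift (r' ≫ d) d' = 0 := by
      apply biprod.hom_ext <;> simp [reassoc_of% f1, e3, f3]
    have g2 : biprod.desc (s ≫ j) s' ≫ biprod.lift (r' ≫ d) d' = 𝟙 (Z ⊞ Z') := by
      apply biprod.hom_ext' <;> apply biprod.hom_ext <;>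
        simp [reassoc_of% f1, e2, f2, f3, reassoc_of% f4]
    have g4 : biprod.desc (s ≫ j) s' ≫ r' ≫ r = 0 := by
      apply biprod.hom_ext' <;> simp [reassoc_of% f1, e4, reassoc_of% f4]
    have g5 : (r' ≫ r) ≫ i ≫ j + biprod.lift (r' ≫ d) d' ≫ biprod.desc (s ≫ j) s' = 𝟙 D := by
      rw [biprod.lift_desc]
      have h12 : (r' ≫ r) ≫ i ≫ j + (r' ≫ d) ≫ s ≫ j = r' ≫ j := by
        rw [Category.assoc, Category.assoc, ← Preadditive.comp_add,
          ← Category.assoc r i j, ← Category.assoc d s j, ← Preadditive.add_comp, e5,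
          Category.id_comp]
      rw [← add_assoc, h12]; exact f5
    exact ⟨Z ⊞ Z', biprod.lift (r' ≫ d) d', g3,
      IsSplit.mem ⟨r' ≫ r, biprod.desc (s ≫ j) s', g1, g2, g3, g4, g5⟩ g3⟩
  · -- epi_comp
    intro A B D p q hp hq
    obtain ⟨K, i, w, hS⟩ := hp
    obtain ⟨K', i', w', hS'⟩ := hq
    obtain ⟨r, s, e1, e2, e3, e4, e5⟩ := mem_isSplit' hS
    obtain ⟨r', s', f1, f2, f3, f4, f5⟩ := mem_isSplit' hS'
    have g1 : biprod.desc i (i' ≫ s) ≫ biprod.lift r (p ≫ r') = 𝟙 (K ⊞ K') := by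
      apply biprod.hom_ext' <;> apply biprod.hom_ext <;>
        simp [e1, e3, e4, reassoc_of% w, reassoc_of% e2, reassoc_of% e4, f1]
    have g2 : (s' ≫ s) ≫ p ≫ q = 𝟙 D := by
      simp [reassoc_of% e2, f2]
    have g3 : biprod.desc i (i' ≫ s) ≫ p ≫ q = 0 := by
      apply biprod.hom_ext' <;> simp [reassoc_of% e3, reassoc_of% e2, e3, f3]
    have g4 : (s' ≫ s) ≫ biprod.lift r (p ≫ r') = 0 := by
      apply biprod.hom_ext <;> simp [reassoc_of% e4, reassoc_of% e2, e4, f4]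
    have g5 : biprod.lift r (p ≫ r') ≫ biprod.desc i (i' ≫ s) + (p ≫ q) ≫ s' ≫ s = 𝟙 A := by
      rw [biprod.lift_desc]
      have h23 : (p ≫ r') ≫ i' ≫ s + (p ≫ q) ≫ s' ≫ s = p ≫ s := by
        rw [Category.assoc, Category.assoc, ← Preadditive.comp_add,
          ← Category.assoc r' i' s, ← Category.assoc q s' s, ← Preadditive.add_comp, f5,
          Category.id_comp]
      rw [add_assoc, h23]; exact e5
    exact ⟨K ⊞ K', biprod.desc i (i' ≫ s), g3,
      IsSplit.mem ⟨biprod.lift r (p ≫ r'), s' ≫ s, g1, g2, g3, g4, g5⟩ g3⟩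
  · -- pushout
    intro A B X i t hi
    obtain ⟨Z, d, w, hS⟩ := hi
    obtain ⟨r, s, e1, e2, e3, e4, e5⟩ := mem_isSplit' hS
    have heq : i ≫ biprod.lift (r ≫ t) d = t ≫ biprod.inl := by
      apply biprod.hom_ext <;> simp [reassoc_of% e1, e3]
    have hcolim : IsColimit (PushoutCocone.mk _ _ heq) := by
      refine PushoutCocone.IsColimit.mk heq (fun sc => biprod.desc sc.inr (s ≫ sc.inl))
        (fun sc => ?_) (fun sc => by simp) (fun sc m hl hr => ?_)
      · rw [biprod.lift_desc, Category.assoc, ← sc.condition, ← Category.assoc r i,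
          ← Category.assoc d s, ← Preadditive.add_comp, e5, Category.id_comp]
      · have hinr : (biprod.inr : Z ⟶ X ⊞ Z) = s ≫ biprod.lift (r ≫ t) d := by
          apply biprod.hom_ext <;> simp [reassoc_of% e4, e2]
        apply biprod.hom_ext'
        · simpa using hr
        · have h2 : biprod.inr ≫ m = s ≫ sc.inl := by
            rw [hinr, Category.assoc, hl]
          rw [h2]; simp
    refine ⟨X ⊞ Z, biprod.lift (r ≫ t) d, biprod.inl, IsPushout.of_isColimit hcolim,
      Z, biprod.snd, by simp, (isSplit_inl X Z).mem (by simp)⟩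
  · -- pullback
    intro B X Y dd t hd
    obtain ⟨K, i, w, hS⟩ := hd
    obtain ⟨r, s, e1, e2, e3, e4, e5⟩ := mem_isSplit' hS
    have heq : biprod.desc (t ≫ s) i ≫ dd = biprod.fst ≫ t := by
      apply biprod.hom_ext' <;> simp [e2, e3]
    have hlim : IsLimit (PullbackCone.mk _ _ heq) := by
      refine PullbackCone.IsLimit.mk heq (fun sc => biprod.lift sc.snd (sc.fst ≫ r))
        (fun sc => ?_) (fun sc => by simp) (fun sc m hl hr => ?_)
      · rw [biprod.lift_desc, ← Category.assoc sc.snd t s, ← sc.condition,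
          Category.assoc, Category.assoc, ← Preadditive.comp_add, add_comm, e5,
          Category.comp_id]
      · have hsnd : (biprod.snd : Y ⊞ K ⟶ K) = biprod.desc (t ≫ s) i ≫ r := by
          apply biprod.hom_ext' <;> simp [e4, reassoc_of% e4, e1]
        apply biprod.hom_ext
        · simpa using hr
        · have h2 : m ≫ biprod.snd = sc.fst ≫ r := by
            rw [hsnd, ← Category.assoc, hl]
          rw [h2]; simp
    refine ⟨Y ⊞ K, biprod.desc (t ≫ s) i, biprod.fst, IsPullback.of_isLimit hlim,
      K, biprod.inr, by simp, (isSplit_inr Y K).mem (by simp)⟩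

theorem splitClass_subset {E : Set (ShortComplex C)} (hE : IsExactStructure E) :
    splitClass C ⊆ E := by
  intro S hS
  obtain ⟨A, B, ⟨φ⟩⟩ := hS
  obtain ⟨K, i', w', hS'⟩ := hE.id_epi B
  have hi'0 : i' = 0 := by simpa using w'
  have hK : IsZero K := by
    obtain ⟨hker⟩ := (hE.kcp _ hS').isKernel
    rw [IsZero.iff_id_eq_zero]
    apply Fork.IsLimit.hom_ext hker
    simp [hi'0]
  have hadm0 : AdmissibleMono E (0 : (0 : C) ⟶ B) := by
    refine ⟨B, 𝟙 B, by simp, ?_⟩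
    exact hE.iso_closed _ _ hS'
      ⟨ShortComplex.isoMk hK.isoZero (Iso.refl _) (Iso.refl _) (by simp [hi'0]) (by simp)⟩
  obtain ⟨P, sB, sX, hpo, hadm⟩ := hE.pushout (0 : (0 : C) ⟶ B) (0 : (0 : C) ⟶ A) hadm0
  have hpo' := IsPushout.of_has_biproduct B A
  have key : sX ≫ (hpo.isoIsPushout _ _ hpo').hom = biprod.inr :=
    IsPushout.inr_isoIsPushout_hom _ _ hpo hpo'
  have hinr : AdmissibleMono E (biprod.inr : A ⟶ B ⊞ A) := by
    rw [← key]; exact amono_comp_iso hE _ hadm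
  obtain ⟨Z, dd, ww, hSd⟩ := hinr
  have hsc : ShortComplex.mk (biprod.inr : A ⟶ B ⊞ A) biprod.fst (by simp) ∈ E :=
    hE.iso_closed _ _ hSd (cok_iso _ _ _ _ _ (hE.kcp _ hSd).isCokernel
      ((isSplit_inr B A).isCokernel (by simp)))
  have hstd : ShortComplex.mk (biprod.inl : A ⟶ A ⊞ B) biprod.snd (by simp) ∈ E := by
    refine hE.iso_closed _ _ hsc
      ⟨ShortComplex.isoMk (Iso.refl _) (biprod.braiding B A) (Iso.refl _) ?_ ?_⟩
    · apply biprod.hom_ext <;> simp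
    · simp
  exact hE.iso_closed _ _ hstd ⟨φ.symm⟩

end SplitExact

theorem sInter_exact (𝒯 : Set (Set (ShortComplex C))) (h : ∀ E ∈ 𝒯, IsExactStructure E)
    {E₀ : Set (ShortComplex C)} (hE₀ : E₀ ∈ 𝒯) : IsExactStructure (⋂₀ 𝒯) := by
  have amono : ∀ {A B : C} (i : A ⟶ B), (∀ E ∈ 𝒯, AdmissibleMono E i) →
      AdmissibleMono (⋂₀ 𝒯) i := by
    intro A B i hall
    obtain ⟨Z, d, w, hS⟩ := hall E₀ hE₀
    exact ⟨Z, d, w, Set.mem_sInter.2 fun E hE =>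
      adm_mono_mem (h E₀ hE₀) (h E hE) hS (hall E hE)⟩
  have aepi : ∀ {B Z : C} (d : B ⟶ Z), (∀ E ∈ 𝒯, AdmissibleEpi E d) →
      AdmissibleEpi (⋂₀ 𝒯) d := by
    intro B Z d hall
    obtain ⟨A, i, w, hS⟩ := hall E₀ hE₀
    exact ⟨A, i, w, Set.mem_sInter.2 fun E hE =>
      adm_epi_mem (h E₀ hE₀) (h E hE) hS (hall E hE)⟩
  have amono' : ∀ {A B : C} (i : A ⟶ B), AdmissibleMono (⋂₀ 𝒯) i →
      ∀ E ∈ 𝒯, AdmissibleMono E i := by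
    rintro A B i ⟨Z, d, w, hS⟩ E hE
    exact ⟨Z, d, w, Set.mem_sInter.1 hS E hE⟩
  have aepi' : ∀ {B Z : C} (d : B ⟶ Z), AdmissibleEpi (⋂₀ 𝒯) d →
      ∀ E ∈ 𝒯, AdmissibleEpi E d := by
    rintro B Z d ⟨A, i, w, hS⟩ E hE
    exact ⟨A, i, w, Set.mem_sInter.1 hS E hE⟩
  constructor
  · intro S hS
    exact (h E₀ hE₀).kcp S (Set.mem_sInter.1 hS E₀ hE₀)
  · intro S T hS e
    exact Set.mem_sInter.2 fun E hE => (h E hE).iso_closed S T (Set.mem_sInter.1 hS E hE) e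
  · exact fun A => amono _ fun E hE => (h E hE).id_mono A
  · exact fun A => aepi _ fun E hE => (h E hE).id_epi A
  · exact fun i j hi hj => amono _ fun E hE =>
      (h E hE).mono_comp i j (amono' _ hi E hE) (amono' _ hj E hE)
  · exact fun p q hp hq => aepi _ fun E hE =>
      (h E hE).epi_comp p q (aepi' _ hp E hE) (aepi' _ hq E hE)
  · intro A B X i t hi
    obtain ⟨P, sB, sX, hpo, hadm⟩ := (h E₀ hE₀).pushout i t (amono' _ hi E₀ hE₀)
    refine ⟨P, sB, sX, hpo, amono _ fun E hE => ?_⟩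
    obtain ⟨P', sB', sX', hpo', hadm'⟩ := (h E hE).pushout i t (amono' _ hi E hE)
    have key : sX' ≫ (hpo'.isoIsPushout _ _ hpo).hom = sX :=
      IsPushout.inr_isoIsPushout_hom _ _ hpo' hpo
    rw [← key]
    exact amono_comp_iso (h E hE) _ hadm'
  · intro B X Y d t hd
    obtain ⟨P, pB, pY, hpb, hadm⟩ := (h E₀ hE₀).pullback d t (aepi' _ hd E₀ hE₀)
    refine ⟨P, pB, pY, hpb, aepi _ fun E hE => ?_⟩
    obtain ⟨P', pB', pY', hpb', hadm'⟩ := (h E hE).pullback d t (aepi' _ hd E hE)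
    have key : (hpb.isoIsPullback _ _ hpb').hom ≫ pY' = pY :=
      IsPullback.isoIsPullback_hom_snd _ _ hpb hpb'
    rw [← key]
    exact aepi_iso_comp (h E hE) _ hadm'


end ExAux

/-- The poset of exact structures on an additive category, ordered by
containment, is a complete (hence bounded) lattice, with meet given by
intersection, bottom element the split exact structure and top element the
maximal exact structure. -/
theorem exactStructures_completeLattice (C : Type u) [Category.{v} C] [Preadditive C]
    [HasZeroObject C] [HasBinaryBiproducts C]
    (Emax : Set (ShortComplex C)) (hmax : IsExactStructure Emax)
    (hmax' : ∀ E : Set (ShortComplex C), IsExactStructure E → E ⊆ Emax) :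
    ∃ inst : CompleteLattice {E : Set (ShortComplex C) // IsExactStructure E},
      (∀ E F : {E : Set (ShortComplex C) // IsExactStructure E},
          inst.le E F ↔ E.1 ⊆ F.1) ∧
      (∀ E F : {E : Set (ShortComplex C) // IsExactStructure E},
          (inst.inf E F).1 = E.1 ∩ F.1) ∧
      (inst.bot.1 = splitClass C) ∧
      (inst.top.1 = Emax) := by
  classical
  letI instInf : InfSet {E : Set (ShortComplex C) // IsExactStructure E} :=
    ⟨fun T => ⟨⋂₀ (insert Emax (Subtype.val '' T)), by
      refine ExAux.sInter_exact _ ?_ (Set.mem_insert _ _)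
      rintro E (rfl | ⟨F, _, rfl⟩)
      · exact hmax
      · exact F.2⟩⟩
  have hglb : ∀ T : Set {E : Set (ShortComplex C) // IsExactStructure E}, IsGLB T (sInf T) := by
    intro T
    constructor
    · intro E hE x hx
      exact Set.mem_sInter.1 hx _ (Set.mem_insert_of_mem _ ⟨E, hE, rfl⟩)
    · intro F hF x hx
      refine Set.mem_sInter.2 ?_
      rintro G (rfl | ⟨G', hG', rfl⟩)
      · exact hmax' F.1 F.2 hx
      · exact hF hG' hx
  refine ⟨completeLatticeOfInf _ hglb, fun E F => Iff.rfl, fun E F => ?_, ?_, ?_⟩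
  · -- inf
    show (sInf ({E, F} : Set _) : {E : Set (ShortComplex C) // IsExactStructure E}).1
      = E.1 ∩ F.1
    apply Set.Subset.antisymm
    · intro x hx
      exact ⟨Set.mem_sInter.1 hx _ (Set.mem_insert_of_mem _ ⟨E, Or.inl rfl, rfl⟩),
        Set.mem_sInter.1 hx _ (Set.mem_insert_of_mem _ ⟨F, Or.inr rfl, rfl⟩)⟩
    · intro x hx
      refine Set.mem_sInter.2 ?_
      rintro G (rfl | ⟨G', hG', rfl⟩)
      · exact hmax' E.1 E.2 hx.1
      · rcases hG' with rfl | rfl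
        · exact hx.1
        · exact hx.2
  · -- bot
    have hsplit : IsExactStructure (splitClass C) := ExAux.splitClass_isExact
    show (sInf (Set.univ : Set {E : Set (ShortComplex C) // IsExactStructure E})).1
      = splitClass C
    apply Set.Subset.antisymm
    · intro x hx
      exact Set.mem_sInter.1 hx _
        (Set.mem_insert_of_mem _ ⟨⟨splitClass C, hsplit⟩, trivial, rfl⟩)
    · intro x hx
      refine Set.mem_sInter.2 ?_
      rintro G (rfl | ⟨G', _, rfl⟩)
      · exact ExAux.splitClass_subset hmax hx
      · exact ExAux.splitClass_subset G'.2 hx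
  · -- top
    show ⋂₀ (insert Emax (Subtype.val ''
      (∅ : Set {E : Set (ShortComplex C) // IsExactStructure E}))) = Emax
    rw [Set.image_empty]
    simp
end

section
/- Let F : (𝒜, ℰ_𝒜) → (ℬ, ℰ_ℬ) be an exact functor between exact categories. Then the class ℰ_F of short exact sequences ξ in ℰ_𝒜 such that F(ξ) is split exact in ℬ forms an exact structure on 𝒜. -/
open CategoryTheory CategoryTheory.Limits

universe v u

variable {C : Type u} [Category.{v} C] [Preadditive C]

namespace ExactReduction

variable {C : Type u} [Category.{v} C] [Preadditive C]

lemma id_zero_of_kernel_id {N A : C} (f : N ⟶ A) (w : f ≫ 𝟙 A = 0)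
    (h : IsLimit (KernelFork.ofι f w)) : 𝟙 N = 0 := by
  have hf : f = 0 := by simpa using w
  exact Fork.IsLimit.hom_ext h (by simp [hf])

lemma id_zero_of_cokernel_id {A M : C} (g : A ⟶ M) (w : 𝟙 A ≫ g = 0)
    (h : IsColimit (CokernelCofork.ofπ g w)) : 𝟙 M = 0 := by
  have hg : g = 0 := by simpa using w
  exact Cofork.IsColimit.hom_ext h (by simp [hg])

section

variable {E : Set (ShortComplex C)}

lemma mem_iso (hE : IsExactStructure E) {S T : ShortComplex C} (hS : S ∈ E) (e : S ≅ T) :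
    T ∈ E :=
  hE.iso_closed S T hS ⟨e⟩

lemma admissibleMono_of_iso (hE : IsExactStructure E) {A B : C} (e : A ≅ B) :
    AdmissibleMono E e.hom := by
  obtain ⟨Z, d, w, h⟩ := hE.id_mono A
  have hd : d = 0 := by simpa using w
  subst hd
  exact ⟨Z, 0, by simp, mem_iso hE h
    (ShortComplex.isoMk (Iso.refl A) e (Iso.refl Z) (by simp) (by simp))⟩

lemma admissibleEpi_of_iso (hE : IsExactStructure E) {A B : C} (e : A ≅ B) :
    AdmissibleEpi E e.hom := by
  obtain ⟨N, f, w, h⟩ := hE.id_epi B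
  have hf : f = 0 := by simpa using w
  subst hf
  exact ⟨N, 0, by simp, mem_iso hE h
    (ShortComplex.isoMk (Iso.refl N) e.symm (Iso.refl B) (by simp) (by simp))⟩

/-- Replace the cokernel part of a conflation by any other cokernel of `S.f`. -/
lemma mem_ofπ (hE : IsExactStructure E) {S : ShortComplex C} (hS : S ∈ E) {Z : C}
    (g' : S.X₂ ⟶ Z) (w' : S.f ≫ g' = 0)
    (h : IsColimit (CokernelCofork.ofπ g' w')) : ShortComplex.mk S.f g' w' ∈ E := by
  obtain ⟨hc⟩ := (hE.kcp S hS).isCokernel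
  refine mem_iso hE hS (ShortComplex.isoMk (Iso.refl _) (Iso.refl _)
    (hc.coconePointUniqueUpToIso h) (by simp) ?_)
  have := hc.comp_coconePointUniqueUpToIso_hom h WalkingParallelPair.one
  simpa using this.symm

/-- Replace the kernel part of a conflation by any other kernel of `S.g`. -/
lemma mem_ofι (hE : IsExactStructure E) {S : ShortComplex C} (hS : S ∈ E) {W : C}
    (f' : W ⟶ S.X₂) (w' : f' ≫ S.g = 0)
    (h : IsLimit (KernelFork.ofι f' w')) : ShortComplex.mk f' S.g w' ∈ E := by
  obtain ⟨hk⟩ := (hE.kcp S hS).isKernel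
  refine mem_iso hE hS (ShortComplex.isoMk (hk.conePointUniqueUpToIso h) (Iso.refl _)
    (Iso.refl _) ?_ (by simp))
  have := hk.conePointUniqueUpToIso_hom_comp h WalkingParallelPair.zero
  simpa using this

end

end ExactReduction
namespace ExactReduction

variable {C : Type u} [Category.{v} C] [Preadditive C] [HasBinaryBiproducts C]

lemma splitClass_iso {S T : ShortComplex C} (hS : S ∈ splitClass C) (e : S ≅ T) :
    T ∈ splitClass C := by
  obtain ⟨A, B, ⟨e'⟩⟩ := hS
  exact ⟨A, B, ⟨e.symm ≪≫ e'⟩⟩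

lemma retraction_of_splitClass {S : ShortComplex C} (hS : S ∈ splitClass C) :
    ∃ r : S.X₂ ⟶ S.X₁, S.f ≫ r = 𝟙 _ := by
  obtain ⟨A, B, ⟨e⟩⟩ := hS
  refine ⟨e.hom.τ₂ ≫ biprod.fst ≫ e.inv.τ₁, ?_⟩
  have h₁ := e.hom.comm₁₂
  have h₂ : e.hom.τ₁ ≫ e.inv.τ₁ = 𝟙 _ := by
    rw [← ShortComplex.comp_τ₁, e.hom_inv_id, ShortComplex.id_τ₁]
  dsimp at h₁
  rw [← Category.assoc, ← h₁]
  simp [h₂]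

lemma section_of_splitClass {S : ShortComplex C} (hS : S ∈ splitClass C) :
    ∃ s : S.X₃ ⟶ S.X₂, s ≫ S.g = 𝟙 _ := by
  obtain ⟨A, B, ⟨e⟩⟩ := hS
  refine ⟨e.hom.τ₃ ≫ biprod.inr ≫ e.inv.τ₂, ?_⟩
  have h₁ := e.inv.comm₂₃
  have h₂ : e.hom.τ₃ ≫ e.inv.τ₃ = 𝟙 _ := by
    rw [← ShortComplex.comp_τ₃, e.hom_inv_id, ShortComplex.id_τ₃]
  dsimp at h₁
  simp only [Category.assoc, h₁]
  simpa using h₂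

lemma mem_splitClass_of_splitting {S : ShortComplex C} (r : S.X₂ ⟶ S.X₁) (s : S.X₃ ⟶ S.X₂)
    (hfr : S.f ≫ r = 𝟙 _) (hsg : s ≫ S.g = 𝟙 _) (hsr : s ≫ r = 0)
    (hid : r ≫ S.f + S.g ≫ s = 𝟙 _) : S ∈ splitClass C := by
  refine ⟨S.X₁, S.X₃, ⟨ShortComplex.isoMk (Iso.refl _)
    ⟨biprod.lift r S.g, biprod.desc S.f s, ?_, ?_⟩ (Iso.refl _) ?_ ?_⟩⟩
  · rw [biprod.lift_desc, hid]
  · apply biprod.hom_ext' <;> apply biprod.hom_ext <;>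
      simp [hfr, hsg, hsr, S.zero]
  · dsimp
    apply biprod.hom_ext <;> simp [hfr, S.zero]
  · simp

lemma mem_splitClass_of_retraction {S : ShortComplex C} (hkcp : IsKernelCokernelPair S)
    (r : S.X₂ ⟶ S.X₁) (hfr : S.f ≫ r = 𝟙 _) : S ∈ splitClass C := by
  obtain ⟨hc⟩ := hkcp.isCokernel
  have hepi : ∀ {W : C} (a b : S.X₃ ⟶ W), S.g ≫ a = S.g ≫ b → a = b :=
    fun a b h => Cofork.IsColimit.hom_ext hc (by simpa using h)
  obtain ⟨s, hs⟩ := CokernelCofork.IsColimit.desc' hc (𝟙 S.X₂ - r ≫ S.f)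
    (by simp [Preadditive.comp_sub, reassoc_of% hfr])
  dsimp at hs
  refine mem_splitClass_of_splitting r s hfr ?_ ?_ ?_
  · refine hepi _ _ ?_
    rw [reassoc_of% hs]
    simp [Preadditive.sub_comp, reassoc_of% S.zero]
  · refine hepi _ _ ?_
    rw [reassoc_of% hs]
    simp [Preadditive.sub_comp, Category.assoc, hfr]
  · rw [hs]
    abel

lemma mem_splitClass_of_section {S : ShortComplex C} (hkcp : IsKernelCokernelPair S)
    (s : S.X₃ ⟶ S.X₂) (hsg : s ≫ S.g = 𝟙 _) : S ∈ splitClass C := by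
  obtain ⟨hk⟩ := hkcp.isKernel
  have hmono : ∀ {W : C} (a b : W ⟶ S.X₁), a ≫ S.f = b ≫ S.f → a = b :=
    fun a b h => Fork.IsLimit.hom_ext hk (by simpa using h)
  obtain ⟨r, hr⟩ := KernelFork.IsLimit.lift' hk (𝟙 S.X₂ - S.g ≫ s)
    (by simp [Preadditive.sub_comp, Category.assoc, hsg])
  dsimp at hr
  refine mem_splitClass_of_splitting r s ?_ hsg ?_ ?_
  · refine hmono _ _ ?_
    rw [Category.assoc, hr]
    simp [Preadditive.comp_sub, reassoc_of% S.zero]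
  · refine hmono _ _ ?_
    rw [Category.assoc, hr]
    simp [Preadditive.comp_sub, reassoc_of% hsg]
  · rw [hr]
    abel

end ExactReduction
namespace ExactReduction

variable {C : Type u} [Category.{v} C] [Preadditive C]

section

variable {E : Set (ShortComplex C)}

lemma hasBinaryBiproducts (hE : IsExactStructure E) : HasBinaryBiproducts C := by
  have : ∀ {X Y : C}, HasColimit (pair X Y) := by
    intro X Y
    obtain ⟨N, f, w, hS⟩ := hE.id_epi X
    have hN : 𝟙 N = 0 := id_zero_of_kernel_id f w (hE.kcp _ hS).isKernel.some
    obtain ⟨P, s₁, s₂, hP, -⟩ := hE.pushout f (0 : N ⟶ Y) ⟨X, 𝟙 X, w, hS⟩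
    have hf : f = 0 := by rw [← Category.id_comp f, hN, zero_comp]
    refine HasColimit.mk ⟨BinaryCofan.mk s₁ s₂, BinaryCofan.IsColimit.mk _
      (fun u v => hP.desc u v (by rw [hf]; simp))
      (fun u v => hP.inl_desc _ _ _) (fun u v => hP.inr_desc _ _ _)
      (fun u v m h₁ h₂ => hP.hom_ext (by rw [hP.inl_desc]; exact h₁)
        (by rw [hP.inr_desc]; exact h₂))⟩
  have : HasBinaryCoproducts C := hasBinaryCoproducts_of_hasColimit_pair C
  exact HasBinaryBiproducts.of_hasBinaryCoproducts

variable [HasBinaryBiproducts C]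

lemma inl_snd_mem (hE : IsExactStructure E) (A X : C) :
    ShortComplex.mk (biprod.inl : A ⟶ A ⊞ X) (biprod.snd : A ⊞ X ⟶ X) (by simp) ∈ E := by
  obtain ⟨N, f, w, hS⟩ := hE.id_epi X
  have hN : 𝟙 N = 0 := id_zero_of_kernel_id f w (hE.kcp _ hS).isKernel.some
  have hf : f = 0 := by rw [← Category.id_comp f, hN, zero_comp]
  obtain ⟨P, s₁, s₂, hP, Z', d', w', h'⟩ := hE.pushout f (0 : N ⟶ A) ⟨X, 𝟙 X, w, hS⟩
  have hP₂ : IsPushout f (0 : N ⟶ A) (biprod.inr : X ⟶ A ⊞ X) (biprod.inl : A ⟶ A ⊞ X) := by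
    refine IsPushout.of_isColimit (c := PushoutCocone.mk _ _ (by rw [hf]; simp))
      (PushoutCocone.IsColimit.mk _ (fun s => biprod.desc s.inr s.inl)
        (fun s => by simp) (fun s => by simp) (fun s m h₁ h₂ => ?_))
    apply biprod.hom_ext' <;> simpa
  set e : P ≅ A ⊞ X := hP.isoIsPushout _ _ hP₂ with he
  have h₂ : s₂ ≫ e.hom = biprod.inl := IsPushout.inr_isoIsPushout_hom (h := hP) (h' := hP₂)
  have hmem : ShortComplex.mk (biprod.inl : A ⟶ A ⊞ X) (e.inv ≫ d')
      (by rw [← h₂]; simp [w']) ∈ E :=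
    mem_iso hE h' (ShortComplex.isoMk (Iso.refl A) e (Iso.refl Z')
      (by simpa using h₂.symm) (by simp))
  have hcok : IsColimit (CokernelCofork.ofπ (biprod.snd : A ⊞ X ⟶ X)
      ((ShortComplex.mk (biprod.inl : A ⟶ A ⊞ X) (biprod.snd : A ⊞ X ⟶ X) (by simp)).zero)) := by
    refine CokernelCofork.IsColimit.ofπ _ _ (fun g' w' => biprod.inr ≫ g')
      (fun g' w' => ?_) (fun g' w' m hm => ?_)
    · apply biprod.hom_ext' <;> simp_all
    · rw [← hm, ← Category.assoc, biprod.inr_snd, Category.id_comp]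
  exact mem_ofπ hE hmem _ _ hcok

lemma inr_fst_mem (hE : IsExactStructure E) (X Y : C) :
    ShortComplex.mk (biprod.inr : Y ⟶ X ⊞ Y) (biprod.fst : X ⊞ Y ⟶ X) (by simp) ∈ E :=
  mem_iso hE (inl_snd_mem hE Y X)
    (ShortComplex.isoMk (Iso.refl Y) (biprod.braiding Y X) (Iso.refl X)
      (by apply biprod.hom_ext <;> simp) (by dsimp; apply biprod.hom_ext' <;> simp))

end

end ExactReduction
namespace ExactReduction

variable {C : Type u} [Category.{v} C] [Preadditive C] [HasBinaryBiproducts C]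
variable {E : Set (ShortComplex C)}

/-- The shear automorphism `(a, x) ↦ (a, x + t a)` of `A ⊞ X`. -/
@[simps] noncomputable def shearIso {A X : C} (t : A ⟶ X) : A ⊞ X ≅ A ⊞ X where
  hom := 𝟙 _ + biprod.fst ≫ t ≫ biprod.inr
  inv := 𝟙 _ - biprod.fst ≫ t ≫ biprod.inr
  hom_inv_id := by
    simp [Preadditive.comp_sub, Preadditive.add_comp, Preadditive.comp_add,
      Preadditive.sub_comp]
  inv_hom_id := by
    simp [Preadditive.comp_sub, Preadditive.add_comp, Preadditive.comp_add,
      Preadditive.sub_comp]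

/-- The shear automorphism `(x, y) ↦ (x + t y, y)` of `X ⊞ Y`. -/
@[simps] noncomputable def shearIso' {X Y : C} (t : Y ⟶ X) : X ⊞ Y ≅ X ⊞ Y where
  hom := 𝟙 _ + biprod.snd ≫ t ≫ biprod.inl
  inv := 𝟙 _ - biprod.snd ≫ t ≫ biprod.inl
  hom_inv_id := by
    simp [Preadditive.comp_sub, Preadditive.add_comp, Preadditive.comp_add,
      Preadditive.sub_comp]
  inv_hom_id := by
    simp [Preadditive.comp_sub, Preadditive.add_comp, Preadditive.comp_add,
      Preadditive.sub_comp]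

lemma admissibleMono_biprod_lift_id (hE : IsExactStructure E) {A X : C} (t : A ⟶ X) :
    AdmissibleMono E (biprod.lift (𝟙 A) t) := by
  have h : biprod.lift (𝟙 A) t = biprod.inl ≫ (shearIso t).hom := by
    apply biprod.hom_ext <;> simp
  rw [h]
  exact hE.mono_comp _ _ ⟨X, biprod.snd, by simp, inl_snd_mem hE A X⟩
    (admissibleMono_of_iso hE (shearIso t))

lemma admissibleEpi_biprod_desc_id (hE : IsExactStructure E) {X Y : C} (t : Y ⟶ X) :
    AdmissibleEpi E (biprod.desc (𝟙 X) t) := by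
  have h : biprod.desc (𝟙 X) t = (shearIso' t).hom ≫ biprod.fst := by
    apply biprod.hom_ext' <;> simp
  rw [h]
  exact hE.epi_comp _ _ (admissibleEpi_of_iso hE (shearIso' t))
    ⟨Y, biprod.inr, by simp, inr_fst_mem hE X Y⟩

lemma admissibleMono_biprod_map (hE : IsExactStructure E) {A B : C} {i : A ⟶ B}
    (hi : AdmissibleMono E i) (X : C) :
    AdmissibleMono E (biprod.map i (𝟙 X)) := by
  obtain ⟨Q, u₁, u₂, hQ, hu₂⟩ := hE.pushout i (biprod.inl : A ⟶ A ⊞ X) hi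
  have hQ' : IsPushout i (biprod.inl : A ⟶ A ⊞ X) (biprod.inl : B ⟶ B ⊞ X)
      (biprod.map i (𝟙 X)) := by
    refine IsPushout.of_isColimit
      (c := PushoutCocone.mk _ _ (biprod.inl_map i (𝟙 X)).symm)
      (PushoutCocone.IsColimit.mk _ (fun s => biprod.desc s.inl (biprod.inr ≫ s.inr))
        (fun s => by simp) (fun s => ?_) (fun s m h₁ h₂ => ?_))
    · apply biprod.hom_ext'
      · rw [← Category.assoc, biprod.inl_map, Category.assoc, biprod.inl_desc]
        exact s.condition
      · rw [← Category.assoc, biprod.inr_map, Category.id_comp, biprod.inr_desc]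
    · apply biprod.hom_ext'
      · rw [biprod.inl_desc]
        exact h₁
      · rw [biprod.inr_desc, ← h₂, ← Category.assoc, biprod.inr_map, Category.id_comp]
  have h₂ : u₂ ≫ (hQ.isoIsPushout _ _ hQ').hom = biprod.map i (𝟙 X) :=
    IsPushout.inr_isoIsPushout_hom (h := hQ) (h' := hQ')
  rw [← h₂]
  exact hE.mono_comp _ _ hu₂ (admissibleMono_of_iso hE (hQ.isoIsPushout _ _ hQ'))

lemma admissibleEpi_biprod_map (hE : IsExactStructure E) {B X : C} {d : B ⟶ X}
    (hd : AdmissibleEpi E d) (Y : C) :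
    AdmissibleEpi E (biprod.map d (𝟙 Y)) := by
  obtain ⟨Q, v₁, v₂, hQ, hv₂⟩ := hE.pullback d (biprod.fst : X ⊞ Y ⟶ X) hd
  have hQ' : IsPullback (biprod.fst : B ⊞ Y ⟶ B) (biprod.map d (𝟙 Y)) d
      (biprod.fst : X ⊞ Y ⟶ X) := by
    refine IsPullback.of_isLimit
      (c := PullbackCone.mk _ _ (biprod.map_fst d (𝟙 Y)).symm)
      (PullbackCone.IsLimit.mk _ (fun s => biprod.lift s.fst (s.snd ≫ biprod.snd))
        (fun s => by simp) (fun s => ?_) (fun s m h₁ h₂ => ?_))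
    · apply biprod.hom_ext
      · rw [Category.assoc, biprod.map_fst, ← Category.assoc, biprod.lift_fst]
        exact s.condition
      · rw [Category.assoc, biprod.map_snd, Category.comp_id, biprod.lift_snd]
    · apply biprod.hom_ext
      · rw [biprod.lift_fst]
        exact h₁
      · rw [biprod.lift_snd, ← h₂, Category.assoc, biprod.map_snd, Category.comp_id]
  have h₂ : (hQ'.isoIsPullback _ _ hQ).hom ≫ v₂ = biprod.map d (𝟙 Y) :=
    IsPullback.isoIsPullback_hom_snd (h := hQ') (h' := hQ)
  rw [← h₂]
  exact hE.epi_comp _ _ (admissibleEpi_of_iso hE (hQ'.isoIsPullback _ _ hQ)) hv₂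

end ExactReduction
namespace ExactReduction

variable {C : Type u} [Category.{v} C] [Preadditive C] [HasBinaryBiproducts C]
variable {E : Set (ShortComplex C)}

lemma pushout_conflation (hE : IsExactStructure E) {A B X P Z : C} {i : A ⟶ B} {d : B ⟶ Z}
    {w : i ≫ d = 0} (hS : ShortComplex.mk i d w ∈ E) {t : A ⟶ X} {sB : B ⟶ P} {sX : X ⟶ P}
    (hP : IsPushout i t sB sX) (w' : biprod.lift i t ≫ biprod.desc sB (-sX) = 0) :
    ShortComplex.mk (biprod.lift i t) (biprod.desc sB (-sX)) w' ∈ E := by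
  have hκ : AdmissibleMono E (biprod.lift i t) := by
    have h : biprod.lift i t = biprod.lift (𝟙 A) t ≫ biprod.map i (𝟙 X) := by
      apply biprod.hom_ext
      · rw [Category.assoc, biprod.map_fst, biprod.lift_fst, ← Category.assoc,
          biprod.lift_fst, Category.id_comp]
      · rw [Category.assoc, biprod.map_snd, biprod.lift_snd, Category.comp_id,
          biprod.lift_snd]
    rw [h]
    exact hE.mono_comp _ _ (admissibleMono_biprod_lift_id hE t)
      (admissibleMono_biprod_map hE ⟨Z, d, w, hS⟩ X)
  obtain ⟨Z₀, q₀, w₀, h₀⟩ := hκ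
  have hq : IsColimit (CokernelCofork.ofπ (biprod.desc sB (-sX)) w') := by
    refine CokernelCofork.IsColimit.ofπ _ _
      (fun g' wg => hP.desc (biprod.inl ≫ g') (-(biprod.inr ≫ g')) ?_)
      (fun g' wg => ?_) (fun g' wg m hm => ?_)
    · rw [Preadditive.comp_neg, eq_neg_iff_add_eq_zero]
      simpa [biprod.lift_eq, Preadditive.add_comp, Category.assoc] using wg
    · apply biprod.hom_ext'
      · rw [← Category.assoc, biprod.inl_desc, hP.inl_desc]
      · rw [← Category.assoc, biprod.inr_desc, Preadditive.neg_comp, hP.inr_desc, neg_neg]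
    · apply hP.hom_ext
      · rw [hP.inl_desc]
        simpa using biprod.inl ≫= hm
      · rw [hP.inr_desc]
        have h := biprod.inr ≫= hm
        simp only [biprod.inr_desc_assoc, Preadditive.neg_comp] at h
        rw [← h, neg_neg]
  exact mem_ofπ hE h₀ _ w' hq

lemma pullback_conflation (hE : IsExactStructure E) {A B X Y P : C} {i : A ⟶ B} {d : B ⟶ X}
    {w : i ≫ d = 0} (hS : ShortComplex.mk i d w ∈ E) {t : Y ⟶ X} {pB : P ⟶ B} {pY : P ⟶ Y}
    (hP : IsPullback pB pY d t) (w' : biprod.lift pB (-pY) ≫ biprod.desc d t = 0) :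
    ShortComplex.mk (biprod.lift pB (-pY)) (biprod.desc d t) w' ∈ E := by
  have hδ : AdmissibleEpi E (biprod.desc d t) := by
    have h : biprod.desc d t = biprod.map d (𝟙 Y) ≫ biprod.desc (𝟙 X) t := by
      apply biprod.hom_ext'
      · rw [← Category.assoc, biprod.inl_map, Category.assoc, biprod.inl_desc,
          biprod.inl_desc, Category.comp_id]
      · rw [← Category.assoc, biprod.inr_map, Category.id_comp, biprod.inr_desc,
          biprod.inr_desc]
    rw [h]
    exact hE.epi_comp _ _ (admissibleEpi_biprod_map hE ⟨A, i, w, hS⟩ Y)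
      (admissibleEpi_biprod_desc_id hE t)
  obtain ⟨A₀, k₀, w₀, h₀⟩ := hδ
  have hk : IsLimit (KernelFork.ofι (biprod.lift pB (-pY)) w') := by
    refine KernelFork.IsLimit.ofι _ _
      (fun k' wk => hP.lift (k' ≫ biprod.fst) (-(k' ≫ biprod.snd)) ?_)
      (fun k' wk => ?_) (fun k' wk m hm => ?_)
    · rw [Preadditive.neg_comp, eq_neg_iff_add_eq_zero]
      simpa [biprod.desc_eq, Preadditive.comp_add, Category.assoc] using wk
    · apply biprod.hom_ext
      · rw [Category.assoc, biprod.lift_fst, hP.lift_fst]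
      · rw [Category.assoc, biprod.lift_snd, Preadditive.comp_neg, hP.lift_snd, neg_neg]
    · apply hP.hom_ext
      · rw [hP.lift_fst]
        simpa using hm =≫ biprod.fst
      · rw [hP.lift_snd]
        have h := hm =≫ biprod.snd
        simp only [Category.assoc, biprod.lift_snd, Preadditive.comp_neg] at h
        rw [← h, neg_neg]
  exact mem_ofι hE h₀ _ w' hk

end ExactReduction

open ExactReduction

/-- If `F : (𝒜, ℰ_𝒜) → (ℬ, ℰ_ℬ)` is an exact functor between exact categories,
then the class of short exact sequences of `ℰ_𝒜` whose image under `F` is split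
exact forms an exact structure on `𝒜`. -/
theorem exactFunctor_reduction {D : Type*} [Category D] [Preadditive D]
    [HasBinaryBiproducts D]
    (EA : Set (ShortComplex C)) (hEA : IsExactStructure EA)
    (EB : Set (ShortComplex D)) (hEB : IsExactStructure EB)
    (F : C ⥤ D) [F.Additive]
    (hF : ∀ S ∈ EA, S.map F ∈ EB) :
    IsExactStructure { S : ShortComplex C | S ∈ EA ∧ S.map F ∈ splitClass D } := by
  have hbb : HasBinaryBiproducts C := ExactReduction.hasBinaryBiproducts hEA
  constructor
  · intro S hS
    exact hEA.kcp S hS.1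
  · rintro S T hS ⟨e⟩
    exact ⟨hEA.iso_closed S T hS.1 ⟨e⟩,
      splitClass_iso hS.2 (F.mapShortComplex.mapIso e)⟩
  · intro A
    obtain ⟨Z, d, w, hS⟩ := hEA.id_mono A
    exact ⟨Z, d, w, hS, mem_splitClass_of_retraction (hEB.kcp _ (hF _ hS)) (𝟙 _)
      (by simp; exact Category.id_comp _)⟩
  · intro A
    obtain ⟨N, f, w, hS⟩ := hEA.id_epi A
    exact ⟨N, f, w, hS, mem_splitClass_of_section (hEB.kcp _ (hF _ hS)) (𝟙 _)
      (by simp; exact Category.id_comp _)⟩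
  · rintro A B D' i j ⟨Z₁, d₁, w₁, h₁, hs₁⟩ ⟨Z₂, d₂, w₂, h₂, hs₂⟩
    obtain ⟨Z, d, w, hS⟩ := hEA.mono_comp i j ⟨Z₁, d₁, w₁, h₁⟩ ⟨Z₂, d₂, w₂, h₂⟩
    obtain ⟨r₁, hr₁⟩ : ∃ r : F.obj B ⟶ F.obj A, F.map i ≫ r = 𝟙 _ :=
      retraction_of_splitClass hs₁
    obtain ⟨r₂, hr₂⟩ : ∃ r : F.obj D' ⟶ F.obj B, F.map j ≫ r = 𝟙 _ :=
      retraction_of_splitClass hs₂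
    refine ⟨Z, d, w, hS, mem_splitClass_of_retraction (hEB.kcp _ (hF _ hS)) (r₂ ≫ r₁) ?_⟩
    change F.map (i ≫ j) ≫ r₂ ≫ r₁ = 𝟙 _
    rw [F.map_comp, Category.assoc, reassoc_of% hr₂, hr₁]
  · rintro A B D' p q ⟨A₁, i₁, w₁, h₁, hs₁⟩ ⟨A₂, i₂, w₂, h₂, hs₂⟩
    obtain ⟨A₀, i₀, w₀, hS⟩ := hEA.epi_comp p q ⟨A₁, i₁, w₁, h₁⟩ ⟨A₂, i₂, w₂, h₂⟩
    obtain ⟨s₁, hsec₁⟩ : ∃ s : F.obj B ⟶ F.obj A, s ≫ F.map p = 𝟙 _ :=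
      section_of_splitClass hs₁
    obtain ⟨s₂, hsec₂⟩ : ∃ s : F.obj D' ⟶ F.obj B, s ≫ F.map q = 𝟙 _ :=
      section_of_splitClass hs₂
    refine ⟨A₀, i₀, w₀, hS, mem_splitClass_of_section (hEB.kcp _ (hF _ hS)) (s₂ ≫ s₁) ?_⟩
    change (s₂ ≫ s₁) ≫ F.map (p ≫ q) = 𝟙 _
    rw [F.map_comp, Category.assoc, reassoc_of% hsec₁, hsec₂]
  · rintro A B X i t ⟨Z, d, w, hmem, hsplit⟩
    obtain ⟨P, sB, sX, hP, Z', d', w', h'⟩ := hEA.pushout i t ⟨Z, d, w, hmem⟩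
    obtain ⟨r, hr⟩ : ∃ r : F.obj B ⟶ F.obj A, F.map i ≫ r = 𝟙 _ :=
      retraction_of_splitClass hsplit
    have w0 : biprod.lift i t ≫ biprod.desc sB (-sX) = 0 := by
      rw [biprod.lift_desc, Preadditive.comp_neg, hP.w, add_neg_cancel]
    have hT := pushout_conflation hEA hmem hP w0
    obtain ⟨hc⟩ := (hEB.kcp _ (hF _ hT)).isCokernel
    obtain ⟨ρ, hρ⟩ : ∃ ρ : F.obj P ⟶ F.obj X,
        F.map (biprod.desc sB (-sX)) ≫ ρ = F.map biprod.fst ≫ r ≫ F.map t - F.map biprod.snd :=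
      ⟨_, (CokernelCofork.IsColimit.desc' hc
      (F.map biprod.fst ≫ r ≫ F.map t - F.map biprod.snd)
      (by
        change F.map (biprod.lift i t) ≫ (F.map biprod.fst ≫ r ≫ F.map t - F.map biprod.snd) = 0
        rw [Preadditive.comp_sub, ← F.map_comp_assoc, biprod.lift_fst, reassoc_of% hr,
          ← F.map_comp, biprod.lift_snd, sub_self])).2⟩
    have h5 := F.map (biprod.inr : X ⟶ B ⊞ X) ≫= hρ
    simp only [Preadditive.comp_sub, ← Functor.map_comp_assoc, ← F.map_comp,
      biprod.inr_desc, biprod.inr_snd, biprod.inr_fst, F.map_id, F.map_zero,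
      Functor.map_neg, Preadditive.neg_comp, zero_comp, zero_sub, neg_inj] at h5
    exact ⟨P, sB, sX, hP, Z', d', w', h',
      mem_splitClass_of_retraction (hEB.kcp _ (hF _ h')) ρ h5⟩
  · rintro B X Y d t ⟨A, i, w, hmem, hsplit⟩
    obtain ⟨P, pB, pY, hP, A', i', w', h'⟩ := hEA.pullback d t ⟨A, i, w, hmem⟩
    obtain ⟨s, hs⟩ : ∃ s : F.obj X ⟶ F.obj B, s ≫ F.map d = 𝟙 _ :=
      section_of_splitClass hsplit
    have w0 : biprod.lift pB (-pY) ≫ biprod.desc d t = 0 := by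
      rw [biprod.lift_desc, Preadditive.neg_comp, hP.w, add_neg_cancel]
    have hT := pullback_conflation hEA hmem hP w0
    obtain ⟨hk⟩ := (hEB.kcp _ (hF _ hT)).isKernel
    obtain ⟨σ, hσ⟩ : ∃ σ : F.obj Y ⟶ F.obj P,
        σ ≫ F.map (biprod.lift pB (-pY)) = F.map t ≫ s ≫ F.map biprod.inl - F.map biprod.inr :=
      ⟨_, (KernelFork.IsLimit.lift' hk
      (F.map t ≫ s ≫ F.map biprod.inl - F.map biprod.inr)
      (by
        change (F.map t ≫ s ≫ F.map biprod.inl - F.map biprod.inr) ≫ F.map (biprod.desc d t) = 0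
        rw [Preadditive.sub_comp, Category.assoc, Category.assoc,
          ← F.map_comp biprod.inl (biprod.desc d t), biprod.inl_desc, hs, Category.comp_id,
          ← F.map_comp, biprod.inr_desc, sub_self])).2⟩
    have h5 := hσ =≫ F.map (biprod.snd : B ⊞ Y ⟶ Y)
    simp only [Preadditive.sub_comp, Category.assoc, ← F.map_comp,
      biprod.lift_snd, biprod.inl_snd, biprod.inr_snd, F.map_id, F.map_zero,
      Functor.map_neg, Preadditive.comp_neg, comp_zero, zero_sub, neg_inj] at h5
    exact ⟨P, pB, pY, hP, A', i', w', h',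
      mem_splitClass_of_section (hEB.kcp _ (hF _ h')) σ h5⟩
end

section
/- For every short exact sequence X ↣ Y ↠ Z in an exact category (𝒜, ℰ) with X, Y, Z of finite ℰ-length, the ℰ-length is superadditive: l_ℰ(Y) ≥ l_ℰ(X) + l_ℰ(Z). -/
open CategoryTheory CategoryTheory.Limits

universe v u

variable {C : Type u} [Category.{v} C] [Preadditive C]

/-- `X` is an `ℰ`-subobject of `Y`: there is an admissible monic `X ↣ Y`. -/
def ESubobject (E : Set (ShortComplex C)) (X Y : C) : Prop :=
  ∃ i : X ⟶ Y, AdmissibleMono E i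

/-- There is a chain `0 = X₀ ↣ X₁ ↣ ⋯ ↣ Xₙ = X` of admissible monics that are
not isomorphisms. -/
def HasChainOfLength (E : Set (ShortComplex C)) (X : C) (n : ℕ) : Prop :=
  ∃ (obj : Fin (n + 1) → C) (f : ∀ i : Fin n, obj i.castSucc ⟶ obj i.succ),
    IsZero (obj 0) ∧ obj (Fin.last n) = X ∧
    ∀ i : Fin n, AdmissibleMono E (f i) ∧ ¬ IsIso (f i)

/-- The `ℰ`-length of `X`: the supremum of the lengths of chains of proper
admissible monics ending in `X`. -/
noncomputable def eLength (E : Set (ShortComplex C)) (X : C) : ℕ∞ :=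
  sSup { n : ℕ∞ | ∃ m : ℕ, HasChainOfLength E X m ∧ n = (m : ℕ∞) }

section Aux

variable {E : Set (ShortComplex C)}

lemma mem_mk_self (S : ShortComplex C) (hS : S ∈ E) :
    ShortComplex.mk S.f S.g S.zero ∈ E := hS

lemma mono_f_of_mem (hE : IsExactStructure E) {S : ShortComplex C} (hS : S ∈ E) : Mono S.f := by
  obtain ⟨h⟩ := (hE.kcp S hS).isKernel
  have := mono_of_isLimit_fork h
  rwa [Fork.ι_ofι] at this

lemma epi_g_of_mem (hE : IsExactStructure E) {S : ShortComplex C} (hS : S ∈ E) : Epi S.g := by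
  obtain ⟨h⟩ := (hE.kcp S hS).isCokernel
  have := epi_of_isColimit_cofork h
  rwa [Cofork.π_ofπ] at this

/-- If `S.f` is an iso then `S.X₃` is zero. -/
lemma isZero_X₃_of_isIso_f (hE : IsExactStructure E) {S : ShortComplex C} (hS : S ∈ E)
    (h : IsIso S.f) : IsZero S.X₃ := by
  have hepi : Epi S.g := epi_g_of_mem hE hS
  have hg : S.g = 0 := by
    rw [← IsIso.inv_hom_id_assoc S.f S.g, S.zero, comp_zero]
  exact IsZero.of_epi_eq_zero S.g hg

/-- If `S.X₃` is zero then `S.f` is an iso. -/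
lemma isIso_f_of_isZero_X₃ (hE : IsExactStructure E) {S : ShortComplex C} (hS : S ∈ E)
    (h : IsZero S.X₃) : IsIso S.f := by
  have hmono : Mono S.f := mono_f_of_mem hE hS
  obtain ⟨hk⟩ := (hE.kcp S hS).isKernel
  have hg : S.g = 0 := h.eq_zero_of_tgt S.g
  obtain ⟨l, hl⟩ := KernelFork.IsLimit.lift' hk (𝟙 S.X₂) (by rw [Category.id_comp, hg])
  rw [Fork.ι_ofι] at hl
  refine ⟨l, ?_, hl⟩
  rw [← cancel_mono S.f, Category.assoc, hl, Category.comp_id, Category.id_comp]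

/-- Kernel transfer: any kernel of an admissible epi gives a sequence in `E`. -/
lemma mem_of_isKernel (hE : IsExactStructure E) {P Y W : C} {d : Y ⟶ W}
    (hd : AdmissibleEpi E d) {k : P ⟶ Y} (hw : k ≫ d = 0)
    (hk : IsLimit (KernelFork.ofι k hw)) : ShortComplex.mk k d hw ∈ E := by
  obtain ⟨A, i, w, hm⟩ := hd
  obtain ⟨hi⟩ := (hE.kcp _ hm).isKernel
  let e : A ≅ P := IsLimit.conePointUniqueUpToIso hi hk
  have hcomm : e.hom ≫ k = i := by
    have := IsLimit.conePointUniqueUpToIso_hom_comp hi hk WalkingParallelPair.zero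
    simpa using this
  refine hE.iso_closed _ _ hm ⟨ShortComplex.isoMk e (Iso.refl _) (Iso.refl _) ?_ ?_⟩
  · simpa using hcomm
  · simp

/-- The pullback of an admissible epi along an admissible monic is an
admissible monic; it is an iso only if the monic was. -/
lemma pullback_admMono (hE : IsExactStructure E) {P B Z Z' : C} {d : B ⟶ Z}
    (hd : AdmissibleEpi E d) {j : Z' ⟶ Z} (hj : AdmissibleMono E j)
    {pB : P ⟶ B} {pT : P ⟶ Z'} (sq : IsPullback pB pT d j) :
    AdmissibleMono E pB ∧ (IsIso pB → IsIso j) := by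
  obtain ⟨W, q, wq, hjq⟩ := hj
  have hq : AdmissibleEpi E q := ⟨Z', j, wq, hjq⟩
  have hdq : AdmissibleEpi E (d ≫ q) := hE.epi_comp d q hd hq
  obtain ⟨hjker⟩ := (hE.kcp _ hjq).isKernel
  have hjmono : Mono j := mono_f_of_mem hE hjq
  have hpBmono : Mono pB := by
    constructor
    intro V u v huv
    apply sq.hom_ext huv
    rw [← cancel_mono j, Category.assoc, Category.assoc, ← sq.w, ← Category.assoc, huv, Category.assoc]
  have hw : pB ≫ (d ≫ q) = 0 := by
    rw [← Category.assoc, sq.w, Category.assoc, wq, comp_zero]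
  have hker : IsLimit (KernelFork.ofι pB hw) := by
    refine KernelFork.IsLimit.ofι' pB hw (fun {V} u hu => ?_)
    obtain ⟨v, hv⟩ := KernelFork.IsLimit.lift' hjker (u ≫ d) (by rw [Category.assoc]; exact hu)
    rw [Fork.ι_ofι] at hv
    exact ⟨sq.lift u v hv.symm, sq.lift_fst u v hv.symm⟩
  have hmem := mem_of_isKernel hE hdq hw hker
  refine ⟨⟨W, d ≫ q, hw, hmem⟩, fun hiso => ?_⟩
  have hz : IsZero W := isZero_X₃_of_isIso_f hE hmem hiso
  exact isIso_f_of_isZero_X₃ hE hjq hz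

/-- The kernel of an admissible epi obtained by pulling back `g` along `c` is the
kernel of `g`. -/
lemma kernel_of_pullback (hE : IsExactStructure E) {Y Z Z' P X : C} {g : Y ⟶ Z} {c : Z' ⟶ Z}
    {pY : P ⟶ Y} {pZ : P ⟶ Z'} (sq : IsPullback pY pZ g c) (hpZ : AdmissibleEpi E pZ)
    {f : X ⟶ Y} (hw : f ≫ g = 0) (hker : IsLimit (KernelFork.ofι f hw)) :
    ∃ (k : X ⟶ P) (w : k ≫ pZ = 0), ShortComplex.mk k pZ w ∈ E := by
  have hfmono : Mono f := by
    have := mono_of_isLimit_fork hker; rwa [Fork.ι_ofι] at this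
  have hcomm : f ≫ g = 0 ≫ c := by rw [hw, zero_comp]
  refine ⟨sq.lift f 0 hcomm, ?_, ?_⟩
  · exact sq.lift_snd f 0 hcomm
  have hkmono : Mono (sq.lift f 0 hcomm) := by
    constructor
    intro V u v huv
    rw [← cancel_mono f, ← sq.lift_fst f 0 hcomm, ← Category.assoc, ← Category.assoc, huv]
  apply mem_of_isKernel hE hpZ
  refine KernelFork.IsLimit.ofι' _ _ (fun {V} u hu => ?_)
  have hug : (u ≫ pY) ≫ g = 0 := by
    rw [Category.assoc, sq.w, ← Category.assoc, hu, zero_comp]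
  obtain ⟨v, hv⟩ := KernelFork.IsLimit.lift' hker (u ≫ pY) hug
  rw [Fork.ι_ofι] at hv
  refine ⟨v, sq.hom_ext ?_ ?_⟩
  · rw [Category.assoc, sq.lift_fst, hv]
  · rw [Category.assoc, sq.lift_snd, comp_zero, hu]

/-- Every object receives an admissible monic from a zero object. -/
lemma exists_zero_admMono (hE : IsExactStructure E) (X : C) :
    ∃ (A : C) (i : A ⟶ X), IsZero A ∧ AdmissibleMono E i := by
  obtain ⟨A, i, w, hm⟩ := hE.id_epi X
  have hi0 : i = 0 := by rw [Category.comp_id] at w; exact w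
  have hmono : Mono i := mono_f_of_mem hE hm
  exact ⟨A, i, IsZero.of_mono_eq_zero i hi0, ⟨X, 𝟙 X, w, hm⟩⟩

lemma admMono_conj_iff {A A' B B' : C} (hA : A' = A) (hB : B = B') (i : A ⟶ B) :
    AdmissibleMono E (eqToHom hA ≫ i ≫ eqToHom hB) ↔ AdmissibleMono E i := by
  subst hA; subst hB; simp

lemma isIso_conj_iff {A A' B B' : C} (hA : A' = A) (hB : B = B') (i : A ⟶ B) :
    IsIso (eqToHom hA ≫ i ≫ eqToHom hB) ↔ IsIso i := by
  subst hA; subst hB; simp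

/-- An inductive reformulation of `HasChainOfLength`. -/
inductive MyChain (E : Set (ShortComplex C)) : C → ℕ → Prop
  | zero (X : C) (h : IsZero X) : MyChain E X 0
  | succ {X Y : C} {n : ℕ} (h : MyChain E X n) (i : X ⟶ Y) (hi : AdmissibleMono E i)
      (hni : ¬ IsIso i) : MyChain E Y (n + 1)

lemma admMono_comp_iso (hE : IsExactStructure E) {A B B' : C} {i : A ⟶ B} (e : B ≅ B')
    (h : AdmissibleMono E i) : AdmissibleMono E (i ≫ e.hom) := by
  obtain ⟨Z, d, w, hm⟩ := h
  refine ⟨Z, e.inv ≫ d, by rw [Category.assoc, e.hom_inv_id_assoc, w], ?_⟩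
  refine hE.iso_closed _ _ hm ⟨ShortComplex.isoMk (Iso.refl _) e (Iso.refl _) ?_ ?_⟩ <;> simp

lemma MyChain.of_iso (hE : IsExactStructure E) {X Y : C} {n : ℕ} (h : MyChain E X n)
    (e : X ≅ Y) : MyChain E Y n := by
  cases h with
  | zero X hX => exact .zero Y (hX.of_iso e.symm)
  | succ h i hi hni =>
    refine .succ h (i ≫ e.hom) (admMono_comp_iso hE e hi) (fun hiso => hni ?_)
    have : i = (i ≫ e.hom) ≫ e.inv := by simp
    rw [this]; infer_instance

lemma exists_myChain (hE : IsExactStructure E) (X : C) : ∃ n, MyChain E X n := by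
  obtain ⟨A, i, hA, hi⟩ := exists_zero_admMono hE X
  by_cases hiso : IsIso i
  · exact ⟨0, .zero X (hA.of_iso (asIso i).symm)⟩
  · exact ⟨1, .succ (.zero A hA) i hi hiso⟩

lemma MyChain.hasChain {X : C} {n : ℕ} (h : MyChain E X n) : HasChainOfLength E X n := by
  induction h with
  | zero X hX => exact ⟨fun _ => X, fun i => i.elim0, hX, rfl, fun i => i.elim0⟩
  | @succ X Y n h i hi hni ih =>
    obtain ⟨obj, f, h0, hlast, hf⟩ := ih
    have e1 : Fin.snoc (α := fun _ => C) obj Y (Fin.last n).castSucc = X := by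
      rw [Fin.snoc_castSucc, hlast]
    have e2 : Y = Fin.snoc (α := fun _ => C) obj Y ((Fin.last n).succ) := by
      rw [Fin.succ_last, Fin.snoc_last]
    have e3 : ∀ j : Fin n, Fin.snoc (α := fun _ => C) obj Y (j.castSucc).castSucc = obj j.castSucc :=
      fun j => by rw [Fin.snoc_castSucc]
    have e4 : ∀ j : Fin n, obj j.succ = Fin.snoc (α := fun _ => C) obj Y ((j.castSucc).succ) :=
      fun j => by rw [Fin.succ_castSucc, Fin.snoc_castSucc]
    refine ⟨Fin.snoc (α := fun _ => C) obj Y,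
      Fin.lastCases (motive := fun j : Fin (n + 1) =>
          Fin.snoc (α := fun _ => C) obj Y j.castSucc ⟶ Fin.snoc (α := fun _ => C) obj Y j.succ)
        (eqToHom e1 ≫ i ≫ eqToHom e2)
        (fun j => eqToHom (e3 j) ≫ f j ≫ eqToHom (e4 j)), ?_, ?_, ?_⟩
    · have : (0 : Fin (n + 2)) = (0 : Fin (n + 1)).castSucc := by simp
      rw [this, Fin.snoc_castSucc]; exact h0
    · exact Fin.snoc_last _ _
    · intro j
      induction j using Fin.lastCases with
      | last =>
        rw [Fin.lastCases_last]
        exact ⟨(admMono_conj_iff _ _ i).mpr hi, fun hiso => hni ((isIso_conj_iff _ _ i).mp hiso)⟩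
      | cast j =>
        rw [Fin.lastCases_castSucc]
        exact ⟨(admMono_conj_iff _ _ (f j)).mpr (hf j).1,
          fun hiso => (hf j).2 ((isIso_conj_iff _ _ (f j)).mp hiso)⟩

lemma myChain_of_hasChain : ∀ {n : ℕ} {X : C}, HasChainOfLength E X n → MyChain E X n := by
  intro n
  induction n with
  | zero =>
    intro X ⟨obj, f, h0, hlast, hf⟩
    have : Fin.last 0 = (0 : Fin 1) := rfl
    rw [this] at hlast
    exact .zero X (hlast ▸ h0)
  | succ n ih =>
    intro X ⟨obj, f, h0, hlast, hf⟩
    have hchain : HasChainOfLength E (obj (Fin.last n).castSucc) n := by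
      refine ⟨fun j => obj j.castSucc,
        fun j => f j.castSucc ≫ eqToHom (congrArg obj (Fin.succ_castSucc j)), ?_, rfl, ?_⟩
      · show IsZero (obj (0 : Fin (n + 1)).castSucc)
        have h00 : ((0 : Fin (n + 1)).castSucc) = (0 : Fin (n + 2)) := by simp
        rw [h00]; exact h0
      · intro j
        constructor
        · have := (admMono_conj_iff (rfl) (congrArg obj (Fin.succ_castSucc j))
            (f j.castSucc)).mpr (hf j.castSucc).1
          simpa using this
        · intro hiso
          refine (hf j.castSucc).2 ?_
          have := (isIso_conj_iff (rfl) (congrArg obj (Fin.succ_castSucc j))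
            (f j.castSucc)).mp (by simpa using hiso)
          exact this
    have mc := ih hchain
    refine .succ mc (f (Fin.last n) ≫ eqToHom (by rw [Fin.succ_last, hlast])) ?_ ?_
    · have := (admMono_conj_iff (rfl) (show obj (Fin.last n).succ = X by
        rw [Fin.succ_last, hlast]) (f (Fin.last n))).mpr (hf (Fin.last n)).1
      simpa using this
    · intro hiso
      refine (hf (Fin.last n)).2 ?_
      have := (isIso_conj_iff (rfl) (show obj (Fin.last n).succ = X by
        rw [Fin.succ_last, hlast]) (f (Fin.last n))).mp (by simpa using hiso)
      exact this

/-- The main induction: chains in the ends give a chain in the middle. -/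
lemma myChain_superadditive (hE : IsExactStructure E) :
    ∀ (k m : ℕ) (S : ShortComplex C), S ∈ E → MyChain E S.X₁ m → MyChain E S.X₃ k →
      MyChain E S.X₂ (m + k) := by
  intro k
  induction k with
  | zero =>
    intro m S hS h1 h3
    have hz : IsZero S.X₃ := by cases h3 with | zero _ h => exact h
    have hiso : IsIso S.f := isIso_f_of_isZero_X₃ hE hS hz
    exact h1.of_iso hE (asIso S.f)
  | succ k ih =>
    intro m S hS h1 h3
    cases h3 with
    | @succ Z' _ _ h3' c hc hnc =>
      have hg : AdmissibleEpi E S.g := ⟨S.X₁, S.f, S.zero, hS⟩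
      obtain ⟨P, pY, pZ, sq, hpZ⟩ := hE.pullback S.g c hg
      obtain ⟨hker⟩ := (hE.kcp S hS).isKernel
      obtain ⟨kk, w, hmem⟩ := kernel_of_pullback hE sq hpZ S.zero hker
      have hP : MyChain E P (m + k) := ih m (ShortComplex.mk kk pZ w) hmem h1 h3'
      obtain ⟨hpY, hiso⟩ := pullback_admMono hE hg hc sq
      exact .succ hP pY hpY (fun h => hnc (hiso h))

lemma eLength_attained (hE : IsExactStructure E) (X : C) (h : eLength E X ≠ ⊤) :
    ∃ m : ℕ, MyChain E X m ∧ eLength E X = (m : ℕ∞) := by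
  set A := { n : ℕ∞ | ∃ m : ℕ, HasChainOfLength E X m ∧ n = (m : ℕ∞) } with hA
  obtain ⟨n₀, hn₀⟩ := exists_myChain hE X
  have hne : A.Nonempty := ⟨(n₀ : ℕ∞), n₀, hn₀.hasChain, rfl⟩
  have hsup : eLength E X = sSup A := rfl
  obtain ⟨N, hN⟩ : ∃ N : ℕ, sSup A = (N : ℕ∞) := by
    rw [hsup] at h
    cases hsA : sSup A with
    | top => exact absurd hsA h
    | coe N => exact ⟨N, rfl⟩
  have hfin : A.Finite := by
    apply Set.Finite.subset (Set.Finite.image (Nat.cast : ℕ → ℕ∞) (Set.finite_Iic N))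
    rintro a ⟨m, hm, rfl⟩
    refine ⟨m, ?_, rfl⟩
    have : (m : ℕ∞) ≤ sSup A := le_sSup ⟨m, hm, rfl⟩
    rw [hN] at this
    exact_mod_cast this
  have hmem : sSup A ∈ A := Set.Nonempty.csSup_mem hne hfin
  obtain ⟨m, hm, hm'⟩ := hmem
  exact ⟨m, myChain_of_hasChain hm, by rw [hsup, hm']⟩

end Aux

/-- Superadditivity of the `ℰ`-length: for a short exact sequence
`X ↣ Y ↠ Z` in `ℰ` with `X`, `Y`, `Z` of finite `ℰ`-length, one has
`l_ℰ(Y) ≥ l_ℰ(X) + l_ℰ(Z)`. -/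
theorem eLength_superadditive (E : Set (ShortComplex C)) (hE : IsExactStructure E)
    (S : ShortComplex C) (hS : S ∈ E)
    (h1 : eLength E S.X₁ ≠ ⊤) (h2 : eLength E S.X₂ ≠ ⊤) (h3 : eLength E S.X₃ ≠ ⊤) :
    eLength E S.X₁ + eLength E S.X₃ ≤ eLength E S.X₂ := by
  obtain ⟨m₁, hc₁, he₁⟩ := eLength_attained hE S.X₁ h1
  obtain ⟨m₃, hc₃, he₃⟩ := eLength_attained hE S.X₃ h3
  have hc₂ := myChain_superadditive hE m₃ m₁ S hS hc₁ hc₃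
  have hle : ((m₁ + m₃ : ℕ) : ℕ∞) ≤ eLength E S.X₂ :=
    le_sSup ⟨m₁ + m₃, hc₂.hasChain, rfl⟩
  rw [he₁, he₃, ← Nat.cast_add]
  exact hle
end

section
/- The map μ_ℰ sending an indecomposable object X to the lexicographically maximal vector (l_ℰ(X_1), ..., l_ℰ(X_n)) over all chains X_1 ⊊_ℰ ... ⊊_ℰ X_n = X of indecomposable proper ℰ-subobjects is order-preserving: if X ⊊_ℰ Y for indecomposables X, Y, then μ_ℰ(X) ⋘ μ_ℰ(Y) in the Gabriel-Roiter order on finite strictly increasing sequences of natural numbers. -/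
open CategoryTheory CategoryTheory.Limits

universe v u

variable {C : Type u} [Category.{v} C] [Preadditive C]

/-- `X` is a proper `ℰ`-subobject of `Y`: there is an admissible monic `X ↣ Y`
that is not an isomorphism. -/
def ProperESub (E : Set (ShortComplex C)) (X Y : C) : Prop :=
  ∃ i : X ⟶ Y, AdmissibleMono E i ∧ ¬ IsIso i

/-- An object is indecomposable if it is nonzero and in any direct sum
decomposition one of the summands is zero. -/
def Indecomposable' [HasBinaryBiproducts C] (X : C) : Prop :=
  ¬ IsZero X ∧ ∀ A B : C, Nonempty (X ≅ A ⊞ B) → IsZero A ∨ IsZero B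

/-- The Gabriel-Roiter order `⋘` on finite sequences of natural numbers:
lexicographic with the order on `ℕ` reversed, where a prefix is smaller. -/
def grLE : List ℕ → List ℕ → Prop
  | [], _ => True
  | _ :: _, [] => False
  | a :: x, b :: y => b < a ∨ (a = b ∧ grLE x y)

/-- The set of length vectors `(l_ℰ(X₁), …, l_ℰ(Xₙ))` of chains
`X₁ ⊊_ℰ ⋯ ⊊_ℰ Xₙ = X` of indecomposable proper `ℰ`-subobjects ending in `X`. -/
def grVectors [HasBinaryBiproducts C] (E : Set (ShortComplex C)) (X : C) :
    Set (List ℕ) :=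
  { l | ∃ (n : ℕ) (obj : Fin (n + 1) → C),
      (∀ i, Indecomposable' (obj i)) ∧ obj (Fin.last n) = X ∧
      (∀ i : Fin n, ProperESub E (obj i.castSucc) (obj i.succ)) ∧
      l = List.ofFn (fun i : Fin (n + 1) => (eLength E (obj i)).toNat) }

/-- `μ` is a Gabriel-Roiter measure: it sends each indecomposable `X` to the
maximal length vector, in the Gabriel-Roiter order, over all chains of
indecomposable proper `ℰ`-subobjects ending in `X`. -/
def IsGRMeasure [HasBinaryBiproducts C] (E : Set (ShortComplex C))
    (μ : C → List ℕ) : Prop :=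
  ∀ X : C, Indecomposable' X →
    μ X ∈ grVectors E X ∧ ∀ v ∈ grVectors E X, grLE v (μ X)


theorem grLE_trans : ∀ x y z : List ℕ, grLE x y → grLE y z → grLE x z
  | [], _, _, _, _ => trivial
  | _ :: _, [], _, h, _ => h.elim
  | _ :: _, _ :: _, [], _, h => h.elim
  | a :: x, b :: y, c :: z, h1, h2 => by
    rcases h1 with h1 | ⟨rfl, h1⟩ <;> rcases h2 with h2 | ⟨rfl, h2⟩
    · exact Or.inl (h2.trans h1)
    · exact Or.inl h1
    · exact Or.inl h2
    · exact Or.inr ⟨rfl, grLE_trans x y z h1 h2⟩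

theorem grLE_append : ∀ (x l : List ℕ), grLE x (x ++ l)
  | [], _ => trivial
  | a :: x, l => Or.inr ⟨rfl, grLE_append x l⟩

/-- The Gabriel-Roiter measure is order-preserving: if `X ⊊_ℰ Y` for
indecomposables `X`, `Y`, then `μ_ℰ(X) ⋘ μ_ℰ(Y)`. -/
theorem grMeasure_monotone [HasBinaryBiproducts C] [EssentiallySmall.{v} C]
    (E : Set (ShortComplex C)) (hE : IsExactStructure E)
    (hfin : ∀ W : C, eLength E W ≠ ⊤)
    (μ : C → List ℕ) (hμ : IsGRMeasure E μ)
    (X Y : C) (hX : Indecomposable' X) (hY : Indecomposable' Y)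
    (hXY : ProperESub E X Y) :
    grLE (μ X) (μ Y) := by
  obtain ⟨hmem, _⟩ := hμ X hX
  obtain ⟨_, hmaxY⟩ := hμ Y hY
  obtain ⟨n, obj, hind, hlast, hchain, hlist⟩ := hmem
  have key : μ X ++ [(eLength E Y).toNat] ∈ grVectors E Y := by
    refine ⟨n + 1, Fin.snoc obj Y, ?_, ?_, ?_, ?_⟩
    · intro i
      refine Fin.lastCases ?_ (fun j => ?_) i
      · rw [Fin.snoc_last]; exact hY
      · rw [Fin.snoc_castSucc]; exact hind j
    · rw [Fin.snoc_last]
    · intro i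
      refine Fin.lastCases ?_ (fun j => ?_) i
      · rw [Fin.snoc_castSucc, Fin.succ_last, Fin.snoc_last, hlast]
        exact hXY
      · rw [Fin.snoc_castSucc, Fin.succ_castSucc, Fin.snoc_castSucc]
        exact hchain j
    · rw [hlist]
      conv_rhs => rw [List.ofFn_succ']
      rw [List.concat_eq_append, Fin.snoc_last]
      simp only [Fin.snoc_castSucc]
  exact grLE_trans _ _ _ (grLE_append (μ X) _) (hmaxY _ key)
end

section
/- If F : X_1 ⊊_ℰ ... ⊊_ℰ X_n = X is a chain of indecomposable proper ℰ-subobjects realizing the Gabriel-Roiter measure of X (i.e., μ_ℰ(X) = (l_ℰ(X_1), ..., l_ℰ(X_n))), then for each i the measure μ_ℰ(X_i) equals the initial subword (l_ℰ(X_1), ..., l_ℰ(X_i)) of μ_ℰ(X). -/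
open CategoryTheory CategoryTheory.Limits

universe v u

variable {C : Type u} [Category.{v} C] [Preadditive C]

/-! ### Auxiliary lemmas -/

section Aux

variable {E : Set (ShortComplex C)}

/-- The key combinatorial fact about the Gabriel–Roiter order. -/
lemma grLE_eq_of_cross : ∀ (p m t : List ℕ), grLE p m → grLE (m ++ t) (p ++ t) →
    (∀ a ∈ m, ∀ b ∈ t, a < b) → (∀ a ∈ p, ∀ b ∈ t, a < b) → m = p := by
  intro p
  induction p with
  | nil =>
    intro m t _ h2 hm _
    match m with
    | [] => rfl
    | a :: m' =>
      exfalso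
      match t, h2 with
      | b :: t', h2 =>
        have hab : a < b := hm a (by simp) b (by simp)
        rcases h2 with h | ⟨h, _⟩ <;> omega
  | cons c p' ih =>
    intro m t h1 h2 hm hp
    match m, h1 with
    | a :: m', h1 =>
      have h2' : grLE (a :: (m' ++ t)) (c :: (p' ++ t)) := by
        simpa using h2
      rcases h1 with h1 | ⟨hac, h1⟩
      · rcases h2' with h2' | ⟨h2', _⟩ <;> omega
      · subst hac
        rcases h2' with h2' | ⟨_, h2'⟩
        · omega
        · have := ih m' t h1 h2' (fun x hx => hm x (by simp [hx]))
            (fun x hx => hp x (by simp [hx]))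
          rw [this]

lemma conj_aux (hE : IsExactStructure E) {A B A' B' : C} (h₁ : A' = A) (g : A ⟶ B)
    (h₂ : B = B') (hg : AdmissibleMono E g) (hng : ¬ IsIso g) :
    AdmissibleMono E (eqToHom h₁ ≫ g ≫ eqToHom h₂) ∧
      ¬ IsIso (eqToHom h₁ ≫ g ≫ eqToHom h₂) := by
  subst h₁; subst h₂
  simpa using ⟨hg, hng⟩

lemma isZero_of_left_id (hE : IsExactStructure E) {A Y : C} (i : A ⟶ Y) (w : i ≫ 𝟙 Y = 0)
    (hS : ShortComplex.mk i (𝟙 Y) w ∈ E) : IsZero A := by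
  obtain ⟨hker⟩ := (hE.kcp _ hS).isKernel
  have hm : Mono i := by
    have := mono_of_isLimit_fork hker
    exact this
  have hi : i = 0 := by simpa using w
  rw [IsZero.iff_id_eq_zero]
  have h0 : 𝟙 A ≫ i = 0 ≫ i := by simp [hi]
  exact (cancel_mono i).mp h0

lemma hasChain_one (hE : IsExactStructure E) {Y : C} (hY : ¬ IsZero Y) :
    HasChainOfLength E Y 1 := by
  obtain ⟨A, i, w, hS⟩ := hE.id_epi Y
  have hA : IsZero A := isZero_of_left_id hE i w hS
  have h₁ : ∀ j : Fin 1, (![A, Y] : Fin 2 → C) j.castSucc = A := by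
    intro j; fin_cases j; simp
  have h₂ : ∀ j : Fin 1, Y = (![A, Y] : Fin 2 → C) j.succ := by
    intro j; fin_cases j; simp
  have hni : ¬ IsIso i := by
    intro h
    exact hY (hA.of_iso (asIso i).symm)
  refine ⟨![A, Y], fun j => eqToHom (h₁ j) ≫ i ≫ eqToHom (h₂ j), by simpa using hA,
    by rfl, fun j => ?_⟩
  exact conj_aux hE (h₁ j) i (h₂ j) ⟨Y, 𝟙 Y, w, hS⟩ hni

lemma hasChain_succ (hE : IsExactStructure E) {Y Z : C} {m : ℕ}
    (h : HasChainOfLength E Y m) (hs : ProperESub E Y Z) :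
    HasChainOfLength E Z (m + 1) := by
  obtain ⟨obj, f, h0, hlast, hf⟩ := h
  obtain ⟨g, hg, hng⟩ := hs
  subst hlast
  have hc : ∀ j : Fin (m + 1), (Fin.snoc obj Z : Fin (m + 2) → C) j.castSucc = obj j :=
    fun j => Fin.snoc_castSucc ..
  have e₁ : ∀ (j : Fin (m + 1)) (h : (j : ℕ) < m),
      obj ((⟨j, h⟩ : Fin m).succ) = (Fin.snoc obj Z : Fin (m + 2) → C) j.succ := by
    intro j h
    rw [show (j.succ : Fin (m + 2)) = Fin.castSucc ⟨(j : ℕ) + 1, by omega⟩ from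
      Fin.ext (by simp), Fin.snoc_castSucc]
    rfl
  have e₂ : ∀ (j : Fin (m + 1)), ¬ ((j : ℕ) < m) →
      Z = (Fin.snoc obj Z : Fin (m + 2) → C) j.succ := by
    intro j h
    rw [show (j.succ : Fin (m + 2)) = Fin.last (m + 1) from
      Fin.ext (by simp; omega), Fin.snoc_last]
  have e₃ : ∀ (j : Fin (m + 1)), ¬ ((j : ℕ) < m) → obj j = obj (Fin.last m) := by
    intro j h
    exact congrArg obj (Fin.ext (by simp; omega))
  refine ⟨Fin.snoc obj Z, fun j => eqToHom (hc j) ≫ (if h : (j : ℕ) < m then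
      (f ⟨j, h⟩ ≫ eqToHom (e₁ j h)) else (eqToHom (e₃ j h) ≫ g ≫ eqToHom (e₂ j h))), ?_,
      Fin.snoc_last .., ?_⟩
  · rw [show (0 : Fin (m + 2)) = Fin.castSucc 0 from rfl, Fin.snoc_castSucc]
    exact h0
  · intro j
    by_cases h : (j : ℕ) < m
    · simp only [dif_pos h]
      exact conj_aux hE (hc j) (f ⟨j, h⟩) (e₁ j h) (hf ⟨j, h⟩).1 (hf ⟨j, h⟩).2
    · simp only [dif_neg h]
      have := conj_aux hE ((hc j).trans (e₃ j h)) g (e₂ j h) hg hng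
      simpa using this

lemma le_eLength {Y : C} {m : ℕ} (h : HasChainOfLength E Y m) : (m : ℕ∞) ≤ eLength E Y :=
  le_sSup ⟨m, h, rfl⟩

lemma eLength_mem {Y : C} {m : ℕ} (hm : HasChainOfLength E Y m)
    (hfinY : eLength E Y ≠ ⊤) : HasChainOfLength E Y (eLength E Y).toNat := by
  have hS : ({ n : ℕ∞ | ∃ m : ℕ, HasChainOfLength E Y m ∧ n = (m : ℕ∞) }).Nonempty :=
    ⟨(m : ℕ∞), m, hm, rfl⟩
  haveI := hS.to_subtype
  have hlt : eLength E Y < ⊤ := lt_top_iff_ne_top.2 hfinY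
  have hmem : eLength E Y ∈ { n : ℕ∞ | ∃ m : ℕ, HasChainOfLength E Y m ∧ n = (m : ℕ∞) } :=
    ENat.sSup_mem_of_nonempty_of_lt_top hlt
  obtain ⟨m', hm', he⟩ := hmem
  have : (eLength E Y).toNat = m' := by rw [he]; simp
  rw [this]
  exact hm'

lemma eLength_lt (hE : IsExactStructure E) {Y Z : C} (hY : ¬ IsZero Y)
    (hfinY : eLength E Y ≠ ⊤) (hs : ProperESub E Y Z) :
    eLength E Y < eLength E Z := by
  have h1 : HasChainOfLength E Y (eLength E Y).toNat :=
    eLength_mem (hasChain_one hE hY) hfinY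
  have h2 := le_eLength (hasChain_succ hE h1 hs)
  calc eLength E Y = ((eLength E Y).toNat : ℕ∞) := (ENat.coe_toNat hfinY).symm
    _ < (((eLength E Y).toNat + 1 : ℕ) : ℕ∞) := by exact_mod_cast Nat.lt_succ_self _
    _ ≤ eLength E Z := h2

lemma toNat_lt_of_lt {x y : ℕ∞} (hx : x ≠ ⊤) (hy : y ≠ ⊤) (h : x < y) :
    x.toNat < y.toNat := by
  rw [← ENat.coe_toNat hx, ← ENat.coe_toNat hy] at h
  exact_mod_cast h

lemma chain_eLength_lt [HasBinaryBiproducts C] (hE : IsExactStructure E)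
    (hfin : ∀ W : C, eLength E W ≠ ⊤) {n : ℕ}
    (obj : Fin (n + 1) → C) (hind : ∀ i, Indecomposable' (obj i))
    (hsub : ∀ i : Fin n, ProperESub E (obj i.castSucc) (obj i.succ)) :
    ∀ b a : ℕ, ∀ _hab : a < b, ∀ hb : b < n + 1,
      eLength E (obj ⟨a, by omega⟩) < eLength E (obj ⟨b, hb⟩) := by
  intro b
  induction b with
  | zero => intro a h _; exact absurd h (by omega)
  | succ b ih =>
    intro a hab hb
    have hstep : eLength E (obj ⟨b, by omega⟩) < eLength E (obj ⟨b + 1, hb⟩) := by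
      have h := hsub ⟨b, by omega⟩
      exact eLength_lt hE (hind ⟨b, by omega⟩).1 (hfin _) h
    rcases Nat.lt_or_ge a b with h | h
    · exact lt_trans (ih a h (by omega)) hstep
    · have : a = b := by omega
      subst this
      exact hstep

lemma grVectors_snoc [HasBinaryBiproducts C] (hE : IsExactStructure E) {Y Z : C} {l : List ℕ}
    (hl : l ∈ grVectors E Y) (hs : ProperESub E Y Z) (hZ : Indecomposable' Z) :
    l ++ [(eLength E Z).toNat] ∈ grVectors E Z := by
  obtain ⟨n, obj, hind, hlast, hsub, hvec⟩ := hl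
  refine ⟨n + 1, Fin.snoc obj Z, ?_, Fin.snoc_last .., ?_, ?_⟩
  · intro j
    induction j using Fin.lastCases with
    | last => rw [Fin.snoc_last]; exact hZ
    | cast j' => rw [Fin.snoc_castSucc]; exact hind j'
  · intro j
    induction j using Fin.lastCases with
    | last =>
      rw [Fin.succ_last, Fin.snoc_last, Fin.snoc_castSucc, hlast]
      exact hs
    | cast j' =>
      rw [Fin.succ_castSucc, Fin.snoc_castSucc, Fin.snoc_castSucc]
      exact hsub j'
  · rw [List.ofFn_succ']
    simp only [Fin.snoc_castSucc, Fin.snoc_last, List.concat_eq_append, hvec]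

end Aux

/-- If a chain of indecomposable proper `ℰ`-subobjects realizes the
Gabriel-Roiter measure of `X`, then for each `i` the measure of `Xᵢ` is the
initial subword of length `i` of the measure of `X`. -/
theorem grMeasure_of_realizing_chain [HasBinaryBiproducts C] [EssentiallySmall.{v} C]
    (E : Set (ShortComplex C)) (hE : IsExactStructure E)
    (hfin : ∀ W : C, eLength E W ≠ ⊤)
    (μ : C → List ℕ) (hμ : IsGRMeasure E μ)
    (X : C) (hX : Indecomposable' X)
    (n : ℕ) (obj : Fin (n + 1) → C)
    (hind : ∀ i, Indecomposable' (obj i)) (hlast : obj (Fin.last n) = X)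
    (hsub : ∀ i : Fin n, ProperESub E (obj i.castSucc) (obj i.succ))
    (hreal : μ X = List.ofFn (fun i : Fin (n + 1) => (eLength E (obj i)).toNat)) :
    ∀ i : Fin (n + 1), μ (obj i) = (μ X).take (i + 1) := by
  intro i
  have hki : (i : ℕ) < n + 1 := i.isLt
  set k := (i : ℕ) with hk
  have hlen : (μ X).length = n + 1 := by rw [hreal, List.length_ofFn]
  have hμXe : ∀ (j : ℕ) (hj : j < n + 1),
      (μ X)[j]'(by rw [hlen]; exact hj) = (eLength E (obj ⟨j, hj⟩)).toNat := by
    intro j hj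
    simp only [hreal, List.getElem_ofFn]
  set p := (μ X).take (k + 1) with hp
  set t := List.ofFn (fun s : Fin (n - k) =>
    (eLength E (obj ⟨k + 1 + s.1, by have := s.2; omega⟩)).toNat) with ht
  have hplen : p.length = k + 1 := by rw [hp, List.length_take, hlen]; omega
  have hdrop : (μ X).drop (k + 1) = t := by
    apply List.ext_getElem
    · simp only [ht, List.length_drop, List.length_ofFn, hlen]
      omega
    · intro j h1 h2
      have h1' : j < n - k := by simpa [hlen] using h1
      rw [List.getElem_drop, hμXe (k + 1 + j) (by omega)]
      simp [ht, List.getElem_ofFn]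
  have hpt : p ++ t = μ X := by
    rw [hp, ← hdrop]
    exact List.take_append_drop _ _
  have hclaim1 : p = List.ofFn (fun j : Fin (k + 1) =>
      (eLength E (obj ⟨j.1, by have := j.2; omega⟩)).toNat) := by
    show List.take (k + 1) (μ X) = _
    apply List.ext_getElem
    · simp [hlen, List.length_take]
      omega
    · intro j h1 h2
      have h1' : j < k + 1 := by simp [hlen, List.length_take] at h1; omega
      rw [List.getElem_take, hμXe j (by omega), List.getElem_ofFn]
  have hA : p ∈ grVectors E (obj i) := by
    rw [hclaim1]
    refine ⟨k, fun j => obj ⟨j.1, by have := j.2; omega⟩, fun j => hind _, ?_,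
      fun j => hsub ⟨j.1, by have := j.2; omega⟩, rfl⟩
    exact congrArg obj (Fin.ext (by simp [hk]))
  have hB : grLE p (μ (obj i)) := (hμ (obj i) (hind i)).2 p hA
  have hD : ∀ d : ℕ, ∀ _hd : k + d ≤ n,
      μ (obj i) ++ List.ofFn (fun s : Fin d =>
        (eLength E (obj ⟨k + 1 + s.1, by have := s.2; omega⟩)).toNat)
        ∈ grVectors E (obj ⟨k + d, by omega⟩) := by
    intro d
    induction d with
    | zero =>
      intro hd
      rw [show (⟨k + 0, by omega⟩ : Fin (n + 1)) = i from Fin.ext (by simp [hk])]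
      simpa using (hμ (obj i) (hind i)).1
    | succ d ihd =>
      intro hd
      have prev := ihd (by omega)
      have hsnoc := grVectors_snoc hE prev (hsub ⟨k + d, by omega⟩)
        (hind ⟨k + d + 1, by omega⟩)
      have heq : List.ofFn (fun s : Fin (d + 1) =>
            (eLength E (obj ⟨k + 1 + s.1, by have := s.2; omega⟩)).toNat)
          = List.ofFn (fun s : Fin d =>
            (eLength E (obj ⟨k + 1 + s.1, by have := s.2; omega⟩)).toNat)
            ++ [(eLength E (obj ⟨k + d + 1, by omega⟩)).toNat] := by
        rw [List.ofFn_succ']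
        simp only [List.concat_eq_append]
        congr 1
        exact congrArg (fun w : Fin (n + 1) => [(eLength E (obj w)).toNat])
          (Fin.ext (by simp; omega))
      rw [heq, ← List.append_assoc]
      exact hsnoc
  have hDX : μ (obj i) ++ t ∈ grVectors E X := by
    have h := hD (n - k) (by omega)
    rw [show (⟨k + (n - k), by omega⟩ : Fin (n + 1)) = Fin.last n from
      Fin.ext (by simp; omega), hlast] at h
    exact h
  have hE2 : grLE (μ (obj i) ++ t) (p ++ t) := by
    rw [hpt]
    exact (hμ X hX).2 _ hDX
  have hbt : ∀ b ∈ t, (eLength E (obj i)).toNat < b := by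
    intro b hb
    rw [ht, List.mem_ofFn] at hb
    obtain ⟨s, rfl⟩ := hb
    have hlt := chain_eLength_lt hE hfin obj hind hsub (k + 1 + s.1) k
      (by omega) (by have := s.2; omega)
    have h2 : obj ⟨k, by omega⟩ = obj i := congrArg obj (Fin.ext (by simp [hk]))
    rw [h2] at hlt
    exact toNat_lt_of_lt (hfin _) (hfin _) hlt
  have hmle : ∀ a ∈ μ (obj i), a ≤ (eLength E (obj i)).toNat := by
    obtain ⟨k₁, obj₁, hind₁, hlast₁, hsub₁, hvec₁⟩ := (hμ (obj i) (hind i)).1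
    intro a ha
    rw [hvec₁, List.mem_ofFn] at ha
    obtain ⟨r, rfl⟩ := ha
    rcases Nat.lt_or_ge r.1 k₁ with h | h
    · have hlt := chain_eLength_lt hE hfin obj₁ hind₁ hsub₁ k₁ r.1 h (by omega)
      have h2 : obj₁ ⟨k₁, by omega⟩ = obj i := hlast₁
      rw [h2] at hlt
      exact le_of_lt (toNat_lt_of_lt (hfin _) (hfin _) hlt)
    · have hr : r = Fin.last k₁ := Fin.ext (by simp; omega)
      beta_reduce
      rw [hr, hlast₁]
  have hple : ∀ a ∈ p, a ≤ (eLength E (obj i)).toNat := by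
    intro a ha
    rw [hclaim1, List.mem_ofFn] at ha
    obtain ⟨j, rfl⟩ := ha
    rcases Nat.lt_or_ge j.1 k with h | h
    · have hlt := chain_eLength_lt hE hfin obj hind hsub k j.1 h (by omega)
      have h2 : obj ⟨k, by omega⟩ = obj i := congrArg obj (Fin.ext (by simp [hk]))
      rw [h2] at hlt
      exact le_of_lt (toNat_lt_of_lt (hfin _) (hfin _) hlt)
    · have h3 : obj ⟨j.1, by have := j.2; omega⟩ = obj i :=
        congrArg obj (Fin.ext (by simp [hk]; omega))
      beta_reduce
      rw [h3]
  exact grLE_eq_of_cross p (μ (obj i)) t hB hE2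
    (fun a ha b hb => lt_of_le_of_lt (hmle a ha) (hbt b hb))
    (fun a ha b hb => lt_of_le_of_lt (hple a ha) (hbt b hb))
end

section
/- The Gabriel-Roiter measure μ_ℰ satisfies axiom (GR3): for indecomposable objects X, Y with l_ℰ(X) ≥ l_ℰ(Y), if μ_ℰ(X') ⋘ μ_ℰ(Y) strictly for every proper indecomposable ℰ-subobject X' of X, then μ_ℰ(X) ⋘ μ_ℰ(Y) (possibly with equality). -/
open CategoryTheory CategoryTheory.Limits

universe v u

variable {C : Type u} [Category.{v} C] [Preadditive C]

lemma grLE_trans_s17 : ∀ u v w : List ℕ, grLE u v → grLE v w → grLE u w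
  | [], _, _, _, _ => trivial
  | _ :: _, [], _, h1, _ => h1.elim
  | _ :: _, _ :: _, [], _, h2 => h2.elim
  | a :: u, b :: v, c :: w, h1, h2 => by
    rcases h1 with h1 | ⟨rfl, h1⟩ <;> rcases h2 with h2 | ⟨rfl, h2⟩
    · exact Or.inl (h2.trans h1)
    · exact Or.inl h1
    · exact Or.inl h2
    · exact Or.inr ⟨rfl, grLE_trans_s17 u v w h1 h2⟩

lemma grLE_antisymm : ∀ u v : List ℕ, grLE u v → grLE v u → u = v
  | [], [], _, _ => rfl
  | [], _ :: _, _, h2 => h2.elim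
  | _ :: _, [], h1, _ => h1.elim
  | a :: u, b :: v, h1, h2 => by
    rcases h1 with h1 | ⟨rfl, h1⟩ <;> rcases h2 with h2 | ⟨e, h2⟩
    · omega
    · omega
    · omega
    · rw [grLE_antisymm u v h1 h2]

lemma grLE_append_s17 : ∀ (u w : List ℕ) (a : ℕ), grLE u w → u ≠ w →
    (∀ b ∈ w, b ≤ a) → grLE (u ++ [a]) w
  | [], [], _, _, hne, _ => absurd rfl hne
  | [], b :: w, a, _, _, hb => by
    have hba : b ≤ a := hb b List.mem_cons_self
    rcases hba.lt_or_eq with hlt | heq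
    · exact Or.inl hlt
    · exact Or.inr ⟨heq.symm, trivial⟩
  | _ :: _, [], _, h1, _, _ => h1.elim
  | c :: u, b :: w, a, h1, hne, hb => by
    rcases h1 with h1 | ⟨rfl, h1⟩
    · exact Or.inl h1
    · refine Or.inr ⟨rfl, grLE_append_s17 u w a h1 (fun e => hne (by rw [e])) ?_⟩
      exact fun x hx => hb x (List.mem_cons_of_mem _ hx)

lemma admissibleMono_eqToHom (E : Set (ShortComplex C)) {A A' B B' : C}
    (h1 : A' = A) (h2 : B = B') (g : A ⟶ B) (hg : AdmissibleMono E g) :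
    AdmissibleMono E (eqToHom h1 ≫ g ≫ eqToHom h2) := by
  subst h1; subst h2; simpa using hg

lemma isIso_eqToHom_comp_iff {A A' B B' : C} (h1 : A' = A) (h2 : B = B')
    (g : A ⟶ B) : IsIso (eqToHom h1 ≫ g ≫ eqToHom h2) ↔ IsIso g := by
  subst h1; subst h2; simp

lemma hasChain_extend (E : Set (ShortComplex C)) {A B : C} (i : A ⟶ B)
    (hi : AdmissibleMono E i) (hni : ¬ IsIso i) {m : ℕ}
    (h : HasChainOfLength E A m) : HasChainOfLength E B (m + 1) := by
  obtain ⟨obj, f, h0, hlast, hf⟩ := h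
  subst hlast
  have e1 : ∀ k : Fin m, (Fin.snoc obj B : Fin (m + 2) → C) k.castSucc.castSucc
      = obj k.castSucc := fun k => Fin.snoc_castSucc ..
  have e2 : ∀ k : Fin m, obj k.succ
      = (Fin.snoc obj B : Fin (m + 2) → C) k.castSucc.succ := by
    intro k
    rw [Fin.succ_castSucc, Fin.snoc_castSucc]
  have e3 : (Fin.snoc obj B : Fin (m + 2) → C) (Fin.last m).castSucc
      = obj (Fin.last m) := Fin.snoc_castSucc ..
  have e4 : B = (Fin.snoc obj B : Fin (m + 2) → C) (Fin.last m).succ := by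
    rw [Fin.succ_last, Fin.snoc_last]
  refine ⟨Fin.snoc obj B,
    fun j => Fin.lastCases (eqToHom e3 ≫ i ≫ eqToHom e4)
      (fun k => eqToHom (e1 k) ≫ f k ≫ eqToHom (e2 k)) j, ?_, ?_, ?_⟩
  · have : (0 : Fin (m + 2)) = (0 : Fin (m + 1)).castSucc := rfl
    rw [this, Fin.snoc_castSucc]
    exact h0
  · exact Fin.snoc_last ..
  · intro j
    induction j using Fin.lastCases with
    | last =>
      simp only [Fin.lastCases_last]
      exact ⟨admissibleMono_eqToHom E _ _ _ hi,
        fun hiso => hni ((isIso_eqToHom_comp_iff _ _ _).mp hiso)⟩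
    | cast k =>
      simp only [Fin.lastCases_castSucc]
      exact ⟨admissibleMono_eqToHom E _ _ _ (hf k).1,
        fun hiso => (hf k).2 ((isIso_eqToHom_comp_iff _ _ _).mp hiso)⟩

lemma eLength_le_of_properESub (E : Set (ShortComplex C)) {A B : C}
    (h : ProperESub E A B) : eLength E A ≤ eLength E B := by
  obtain ⟨i, hi, hni⟩ := h
  refine sSup_le ?_
  rintro n ⟨m, hc, rfl⟩
  have hmem : ((m + 1 : ℕ) : ℕ∞) ∈
      {n : ℕ∞ | ∃ k : ℕ, HasChainOfLength E B k ∧ n = (k : ℕ∞)} :=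
    ⟨m + 1, hasChain_extend E i hi hni hc, rfl⟩
  calc (m : ℕ∞) ≤ ((m + 1 : ℕ) : ℕ∞) := by exact_mod_cast Nat.le_succ m
    _ ≤ eLength E B := le_sSup hmem

lemma chain_eLength_le (E : Set (ShortComplex C)) {m : ℕ} (obj : Fin (m + 1) → C)
    (hstep : ∀ i : Fin m, ProperESub E (obj i.castSucc) (obj i.succ)) :
    ∀ i : Fin (m + 1), eLength E (obj i) ≤ eLength E (obj (Fin.last m)) := by
  intro i
  obtain ⟨k, hk⟩ : ∃ k, (i : ℕ) + k = m := ⟨m - i, by omega⟩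
  induction k generalizing i with
  | zero =>
    have : i = Fin.last m := by
      apply Fin.ext
      simpa using hk
    rw [this]
  | succ k ih =>
    have hlt : (i : ℕ) < m := by omega
    have hc : (⟨(i : ℕ), hlt⟩ : Fin m).castSucc = i := by
      apply Fin.ext; rfl
    have h1 : eLength E (obj i) ≤ eLength E (obj (⟨(i : ℕ), hlt⟩ : Fin m).succ) := by
      have := eLength_le_of_properESub E (hstep ⟨(i : ℕ), hlt⟩)
      rwa [hc] at this
    exact h1.trans (ih _ (by simp; omega))

/-- Axiom (GR₃) for the Gabriel-Roiter measure: for indecomposables `X`, `Y`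
with `l_ℰ(X) ≥ l_ℰ(Y)`, if `μ_ℰ(X') ⋘ μ_ℰ(Y)` strictly for every proper
indecomposable `ℰ`-subobject `X'` of `X`, then `μ_ℰ(X) ⋘ μ_ℰ(Y)`. -/
theorem grMeasure_GR3 [HasBinaryBiproducts C] [EssentiallySmall.{v} C]
    (E : Set (ShortComplex C)) (hE : IsExactStructure E)
    (hfin : ∀ W : C, eLength E W ≠ ⊤)
    (μ : C → List ℕ) (hμ : IsGRMeasure E μ)
    (X Y : C) (hX : Indecomposable' X) (hY : Indecomposable' Y)
    (hlen : eLength E Y ≤ eLength E X)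
    (h : ∀ X' : C, Indecomposable' X' → ProperESub E X' X →
      grLE (μ X') (μ Y) ∧ μ X' ≠ μ Y) :
    grLE (μ X) (μ Y) := by
  obtain ⟨hXmem, _⟩ := hμ X hX
  obtain ⟨hYmem, _⟩ := hμ Y hY
  set a := (eLength E X).toNat with ha
  have hμYne : μ Y ≠ [] := by
    obtain ⟨m, obj, _, _, _, hl⟩ := hYmem
    rw [hl]
    simp
  have hbound : ∀ b ∈ μ Y, b ≤ a := by
    obtain ⟨m, obj, hind, hlast, hstep, hl⟩ := hYmem
    intro b hb
    rw [hl, List.mem_ofFn] at hb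
    obtain ⟨i, rfl⟩ := hb
    have h1 : eLength E (obj i) ≤ eLength E Y :=
      hlast ▸ chain_eLength_le E obj hstep i
    exact ENat.toNat_le_toNat (h1.trans hlen) (hfin X)
  obtain ⟨n, obj, hind, hlast, hstep, hl⟩ := hXmem
  match n, obj, hind, hlast, hstep, hl with
  | 0, obj, hind, hlast, hstep, hl =>
    have hμX : μ X = [a] := by
      rw [hl, ha, ← hlast]
      rfl
    rw [hμX]
    exact grLE_append_s17 [] (μ Y) a trivial (fun e => hμYne e.symm) hbound
  | m + 1, obj, hind, hlast, hstep, hl =>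
    set X' := obj ((Fin.last m).castSucc) with hX'
    set v' := List.ofFn (fun i : Fin (m + 1) => (eLength E (obj i.castSucc)).toNat)
      with hv'
    have hv'mem : v' ∈ grVectors E X' := by
      refine ⟨m, fun i => obj i.castSucc, fun i => hind _, rfl, ?_, rfl⟩
      intro i
      have := hstep i.castSucc
      rwa [Fin.succ_castSucc] at this
    have hX'ind : Indecomposable' X' := hind _
    have hX'X : ProperESub E X' X := by
      have := hstep (Fin.last m)
      rwa [Fin.succ_last, hlast] at this
    have hmax : grLE v' (μ X') := (hμ X' hX'ind).2 v' hv'mem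
    obtain ⟨hXY', hne'⟩ := h X' hX'ind hX'X
    have hv'Y : grLE v' (μ Y) := grLE_trans_s17 _ _ _ hmax hXY'
    have hv'ne : v' ≠ μ Y := fun e =>
      hne' (grLE_antisymm _ _ hXY' (e ▸ hmax))
    have hμX : μ X = v' ++ [a] := by
      rw [hl, List.ofFn_succ', List.concat_eq_append, hlast]
    rw [hμX]
    exact grLE_append_s17 v' (μ Y) a hv'Y hv'ne hbound
end

section
/- For every n ∈ ℕ, the set of values { μ_ℰ(X) : X indecomposable, l_ℰ(X) ≤ n } is finite. -/
open CategoryTheory CategoryTheory.Limits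

universe v u

variable {C : Type u} [Category.{v} C] [Preadditive C]

lemma admissibleMono_of_isIso {E : Set (ShortComplex C)} (hE : IsExactStructure E)
    {A B : C} (e : A ⟶ B) (he : IsIso e) : AdmissibleMono E e := by
  obtain ⟨Z, d, w, hS⟩ := hE.id_mono B
  have hd : d = 0 := by simpa using w
  refine ⟨Z, d, by simp [hd], ?_⟩
  refine hE.iso_closed _ _ hS ⟨ShortComplex.isoMk (asIso e).symm (Iso.refl _) (Iso.refl _) ?_ ?_⟩
  · simp
  · simp

lemma admissibleMono_comp_eqToHom {E : Set (ShortComplex C)} (hE : IsExactStructure E)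
    {A A' B B' : C} (e : A' = A) (e' : B = B') (i : A ⟶ B) (hi : AdmissibleMono E i) :
    AdmissibleMono E (eqToHom e ≫ i ≫ eqToHom e') := by
  exact hE.mono_comp _ _ (admissibleMono_of_isIso hE _ inferInstance)
    (hE.mono_comp _ _ hi (admissibleMono_of_isIso hE _ inferInstance))

lemma existsZeroSub (E : Set (ShortComplex C)) (hE : IsExactStructure E) (A : C) :
    ∃ (Z : C) (z : Z ⟶ A), IsZero Z ∧ AdmissibleMono E z := by
  obtain ⟨A', i, w, hS⟩ := hE.id_epi A
  have hi : i = 0 := by simpa using w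
  obtain ⟨hk⟩ := (hE.kcp _ hS).isKernel
  refine ⟨A', i, ?_, A, 𝟙 A, w, hS⟩
  rw [IsZero.iff_id_eq_zero]
  apply Fork.IsLimit.hom_ext hk
  simp [hi]

omit [Preadditive C] in
lemma isIso_of_eqToHom_comp {A A' B B' : C} (e : A' = A) (e' : B = B') (g : A ⟶ B)
    (h : IsIso (eqToHom e ≫ g ≫ eqToHom e')) : IsIso g := by
  subst e; subst e'; simpa using h

lemma chain_one (E : Set (ShortComplex C)) (hE : IsExactStructure E) {X : C}
    (hX : ¬ IsZero X) : HasChainOfLength E X 1 := by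
  obtain ⟨Z, z, hZ, hz⟩ := existsZeroSub E hE X
  refine ⟨![Z, X],
    fun i => eqToHom (by fin_cases i <;> rfl) ≫ z ≫ eqToHom (by fin_cases i <;> rfl),
    by simpa using hZ, rfl, fun i => ⟨admissibleMono_comp_eqToHom hE _ _ _ hz, ?_⟩⟩
  intro h
  have := isIso_of_eqToHom_comp _ _ _ h
  exact hX (hZ.of_iso (asIso z).symm)

lemma chain_extend (E : Set (ShortComplex C)) (hE : IsExactStructure E) {A B : C} {m : ℕ}
    (h : HasChainOfLength E A m) (i : A ⟶ B) (hi : AdmissibleMono E i) (hni : ¬ IsIso i) :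
    HasChainOfLength E B (m + 1) := by
  obtain ⟨obj, f, h0, hlast, hf⟩ := h
  refine ⟨Fin.snoc obj B, fun j => Fin.lastCases
      (eqToHom (by simp [hlast]) ≫ i ≫ eqToHom (by simp [Fin.succ_last]))
      (fun j => eqToHom (by simp) ≫ f j ≫ eqToHom (by simp [Fin.succ_castSucc, -Fin.castSucc_succ])) j,
    ?_, by simp, ?_⟩
  · have h00 : (0 : Fin (m + 2)) = Fin.castSucc 0 := rfl
    rw [h00, Fin.snoc_castSucc]
    exact h0
  · intro j
    refine Fin.lastCases ?_ (fun j => ?_) j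
    · simp only [Fin.lastCases_last]
      constructor
      · exact admissibleMono_comp_eqToHom hE _ _ _ hi
      · intro hiso
        exact hni (isIso_of_eqToHom_comp _ _ _ hiso)
    · simp only [Fin.lastCases_castSucc]
      constructor
      · exact admissibleMono_comp_eqToHom hE _ _ _ (hf j).1
      · intro hiso
        exact (hf j).2 (isIso_of_eqToHom_comp _ _ _ hiso)

lemma eLength_lt_s18 (E : Set (ShortComplex C)) (hE : IsExactStructure E)
    (hfin : ∀ W : C, eLength E W ≠ ⊤) {A B : C}
    (hA : ¬ IsZero A) (hAB : ProperESub E A B) : eLength E A < eLength E B := by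
  obtain ⟨i, hi, hni⟩ := hAB
  set S := { n : ℕ∞ | ∃ m : ℕ, HasChainOfLength E A m ∧ n = (m : ℕ∞) } with hSdef
  have hne : S.Nonempty := ⟨1, 1, chain_one E hE hA, rfl⟩
  obtain ⟨m₀, hm₀⟩ := WithTop.ne_top_iff_exists.mp (hfin A)
  have hSfin : S.Finite := by
    have : S ⊆ (fun k : ℕ => (k : ℕ∞)) '' (Set.Iic m₀) := by
      rintro x ⟨m, hm, rfl⟩
      refine ⟨m, ?_, rfl⟩
      have h2 := le_sSup (show (m : ℕ∞) ∈ S from ⟨m, hm, rfl⟩)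
      have hS2 : sSup S = eLength E A := rfl
      rw [hS2, ← hm₀] at h2
      exact Set.mem_Iic.mpr (Nat.cast_le.mp h2)
    exact ((Set.finite_Iic m₀).image _).subset this
  have hmem : sSup S ∈ S := hne.csSup_mem hSfin
  obtain ⟨m, hchain, hm⟩ := hmem
  have h1 : eLength E A = (m : ℕ∞) := hm
  have h2 : ((m + 1 : ℕ) : ℕ∞) ≤ eLength E B :=
    le_sSup ⟨m + 1, chain_extend E hE hchain i hi hni, rfl⟩
  rw [h1]
  refine lt_of_lt_of_le ?_ h2
  exact_mod_cast Nat.lt_succ_self m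

/-- (GR₅): for every `n`, the set of values of the Gabriel-Roiter measure on
indecomposables of `ℰ`-length at most `n` is finite. -/
theorem grMeasure_values_finite [HasBinaryBiproducts C] [EssentiallySmall.{v} C]
    (E : Set (ShortComplex C)) (hE : IsExactStructure E)
    (hfin : ∀ W : C, eLength E W ≠ ⊤)
    (μ : C → List ℕ) (hμ : IsGRMeasure E μ) (n : ℕ) :
    Set.Finite { v : List ℕ | ∃ X : C, Indecomposable' X ∧
      eLength E X ≤ (n : ℕ∞) ∧ v = μ X } := by
  have hT : {l : List ℕ | l.length ≤ n + 1 ∧ ∀ x ∈ l, x ≤ n}.Finite := by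
    have h1 : {l : List (Fin (n + 1)) | l.length ≤ n + 1}.Finite :=
      List.finite_length_le _ _
    apply (h1.image (List.map Fin.val)).subset
    rintro l ⟨hlen, hmem⟩
    refine ⟨l.pmap (fun x hx => (⟨x, hx⟩ : Fin (n + 1)))
      (fun x hx => Nat.lt_succ_of_le (hmem x hx)), by simpa using hlen, ?_⟩
    simp [List.map_pmap]
  apply hT.subset
  rintro v ⟨X, hX, hlen, rfl⟩
  obtain ⟨hv, -⟩ := hμ X hX
  obtain ⟨N, obj, hind, hlast, hsub, heq⟩ := hv
  set g : Fin (N + 1) → ℕ := fun i => (eLength E (obj i)).toNat with hg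
  have hmono : StrictMono g := by
    rw [Fin.strictMono_iff_lt_succ]
    intro i
    have h := eLength_lt_s18 E hE hfin ((hind i.castSucc).1) (hsub i)
    obtain ⟨a, ha⟩ := WithTop.ne_top_iff_exists.mp (hfin (obj i.castSucc))
    obtain ⟨b, hb⟩ := WithTop.ne_top_iff_exists.mp (hfin (obj i.succ))
    simp only [hg]
    rw [← ha, ← hb] at h ⊢
    change ENat.toNat ((a : ℕ) : ℕ∞) < ENat.toNat ((b : ℕ) : ℕ∞)
    rw [ENat.toNat_coe, ENat.toNat_coe]
    exact WithTop.coe_lt_coe.mp h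
  have hbound : ∀ i, g i ≤ n := by
    intro i
    refine (hmono.monotone (Fin.le_last i)).trans ?_
    simp only [hg, hlast]
    exact ENat.toNat_le_of_le_coe hlen
  constructor
  · rw [heq]
    simp only [List.length_ofFn]
    have hinj : Function.Injective
        (fun i : Fin (N + 1) => (⟨g i, Nat.lt_succ_of_le (hbound i)⟩ : Fin (n + 1))) := by
      intro a b hab
      exact hmono.injective (by simpa using congrArg Fin.val hab)
    simpa using Fintype.card_le_of_injective _ hinj
  · intro x hx
    rw [heq] at hx
    obtain ⟨i, rfl⟩ := List.mem_ofFn.mp hx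
    exact hbound i
end
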